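/- arXiv:1508.07256 — 3 statements merged into one kernel-verified Lean document; each statement's English description precedes it below -/
import Mathlib

section
/- If a class C of finite graphs is limit quasi-wide, then C is limit topologically nowhere dense, i.e., the countably infinite clique K_ω does not belong to C*∇̃ω. -/
namespace NWD

open SimpleGraph Filter

/-! ### Shallow minors -/

/-- A `d`-shallow minor model of `H` in `G`: a family of pairwise disjoint branch sets,
each connected of radius at most `d` (witnessed by a center joined to every vertex of the
branch set by a walk of length at most `d` inside the branch set), such that every edge of `H`
is realized by an edge of `G` between the corresponding branch sets. -/
def IsShallowMinorModel {V W : Type} (G : SimpleGraph V) (H : SimpleGraph W) (d : ℕ)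
    (α : W → G.Subgraph) : Prop :=
  (∀ w : W, ∃ c : (α w).verts, ∀ x : (α w).verts, ∃ p : (α w).coe.Walk c x, p.length ≤ d) ∧
  (∀ w w' : W, w ≠ w' → Disjoint (α w).verts (α w').verts) ∧
  (∀ w w' : W, H.Adj w w' → ∃ x ∈ (α w).verts, ∃ y ∈ (α w').verts, G.Adj x y)

/-- `H` is a shallow minor of `G` at depth `d`. -/
def IsShallowMinor {V W : Type} (G : SimpleGraph V) (H : SimpleGraph W) (d : ℕ) : Prop :=
  ∃ α : W → G.Subgraph, IsShallowMinorModel G H d α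

/-! ### Topological shallow minors -/

/-- A `d`-shallow topological minor model of `H` in `G`: an injective map `f` on vertices
together with, for every edge `uv` of `H`, a path of length at most `2d+1` in `G` from `f u`
to `f v`; the paths are pairwise vertex-disjoint apart from possibly sharing endpoints. -/
def IsTopMinorModel {V W : Type} (G : SimpleGraph V) (H : SimpleGraph W) (d : ℕ)
    (f : W → V) (P : ∀ ⦃u v : W⦄, H.Adj u v → G.Walk (f u) (f v)) : Prop :=
  Function.Injective f ∧
  (∀ ⦃u v : W⦄ (h : H.Adj u v), (P h).IsPath) ∧
  (∀ ⦃u v : W⦄ (h : H.Adj u v), (P h).length ≤ 2 * d + 1) ∧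
  (∀ ⦃u v : W⦄ (h : H.Adj u v), P h.symm = (P h).reverse) ∧
  (∀ ⦃u v u' v' : W⦄ (h : H.Adj u v) (h' : H.Adj u' v'), s(u, v) ≠ s(u', v') →
    ∀ x : V, x ∈ (P h).support → x ∈ (P h').support →
      (x = f u ∨ x = f v) ∧ (x = f u' ∨ x = f v'))

/-- `H` is a topological shallow minor of `G` at depth `d`. -/
def IsTopShallowMinor {V W : Type} (G : SimpleGraph V) (H : SimpleGraph W) (d : ℕ) : Prop :=
  ∃ (f : W → V) (P : ∀ ⦃u v : W⦄, H.Adj u v → G.Walk (f u) (f v)),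
    IsTopMinorModel G H d f P

/-! ### Ultraproducts of graphs -/

/-- The setoid identifying sequences agreeing on a set of the ultrafilter. -/
def prodSetoid (U : Ultrafilter ℕ) (Vs : ℕ → Type) : Setoid (∀ n, Vs n) where
  r g h := ∀ᶠ n in (U : Filter ℕ), g n = h n
  iseqv := by
    constructor
    · intro g; exact Eventually.of_forall fun n => rfl
    · intro g h hg; exact hg.mono fun n hn => hn.symm
    · intro g h k h1 h2; filter_upwards [h1, h2] with n e1 e2; rw [e1, e2]

/-- The vertex set of the ultraproduct. -/
def UVertex (U : Ultrafilter ℕ) (Vs : ℕ → Type) : Type := Quotient (prodSetoid U Vs)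

/-- The ultraproduct of a sequence of graphs along the ultrafilter `U`. -/
def UGraph (U : Ultrafilter ℕ) {Vs : ℕ → Type} (Gs : ∀ n, SimpleGraph (Vs n)) :
    SimpleGraph (UVertex U Vs) where
  Adj x y := Quotient.liftOn₂ x y
    (fun g h => ∀ᶠ n in (U : Filter ℕ), (Gs n).Adj (g n) (h n))
    (by
      intro a b a' b' ha hb
      apply propext
      constructor
      · intro hadj; filter_upwards [hadj, ha, hb] with n h1 h2 h3; rw [← h2, ← h3]; exact h1
      · intro hadj; filter_upwards [hadj, ha, hb] with n h1 h2 h3; rw [h2, h3]; exact h1)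
  symm := by
    constructor
    intro x y
    refine Quotient.inductionOn₂ x y ?_
    intro g h hadj
    exact hadj.mono fun n hn => hn.symm
  loopless := by
    constructor
    intro x
    refine Quotient.inductionOn x ?_
    intro g hadj
    obtain ⟨n, hn⟩ := hadj.exists
    exact (Gs n).irrefl hn

/-! ### Graph classes and class limits -/

/-- A class of graphs: a predicate on graphs over arbitrary vertex types. -/
def GraphClass : Type 1 := ∀ V : Type, SimpleGraph V → Prop

/-- `C` is a class of finite graphs. -/
def FiniteClass (C : GraphClass) : Prop :=
  ∀ (V : Type) (G : SimpleGraph V), C V G → Finite V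

/-- `H` is (isomorphic to) a subgraph of `G`. -/
def IsSubgraphOf {W V : Type} (H : SimpleGraph W) (G : SimpleGraph V) : Prop :=
  ∃ f : W → V, Function.Injective f ∧ ∀ ⦃u v : W⦄, H.Adj u v → G.Adj (f u) (f v)

/-- Membership in the class limit `C*`: subgraphs of ultraproducts of sequences from `C`. -/
def InLimit (U : Ultrafilter ℕ) (C : GraphClass) {W : Type} (H : SimpleGraph W) : Prop :=
  ∃ (Vs : ℕ → Type) (Gs : ∀ n, SimpleGraph (Vs n)),
    (∀ n, C (Vs n) (Gs n)) ∧ IsSubgraphOf H (UGraph U Gs)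

/-- `H ∈ C ▽ d`. -/
def InClassMinor (C : GraphClass) (d : ℕ) {W : Type} (H : SimpleGraph W) : Prop :=
  ∃ (V : Type) (G : SimpleGraph V), C V G ∧ IsShallowMinor G H d

/-- `H ∈ C ∇̃ d`. -/
def InClassTopMinor (C : GraphClass) (d : ℕ) {W : Type} (H : SimpleGraph W) : Prop :=
  ∃ (V : Type) (G : SimpleGraph V), C V G ∧ IsTopShallowMinor G H d

/-- `H ∈ C* ▽ d`. -/
def InLimitMinor (U : Ultrafilter ℕ) (C : GraphClass) (d : ℕ) {W : Type}
    (H : SimpleGraph W) : Prop :=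
  ∃ (V : Type) (G : SimpleGraph V), InLimit U C G ∧ IsShallowMinor G H d

/-- `H ∈ C* ∇̃ d`. -/
def InLimitTopMinor (U : Ultrafilter ℕ) (C : GraphClass) (d : ℕ) {W : Type}
    (H : SimpleGraph W) : Prop :=
  ∃ (V : Type) (G : SimpleGraph V), InLimit U C G ∧ IsTopShallowMinor G H d

/-- `C` is somewhere dense: all finite graphs are shallow minors at some fixed depth. -/
def SomewhereDense (C : GraphClass) : Prop :=
  ∃ d : ℕ, ∀ (W : Type) (H : SimpleGraph W), Finite W → InClassMinor C d H

/-- `C` is topologically somewhere dense. -/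
def TopSomewhereDense (C : GraphClass) : Prop :=
  ∃ d : ℕ, ∀ (W : Type) (H : SimpleGraph W), Finite W → InClassTopMinor C d H

/-- The countably infinite clique `K_ω`. -/
def Komega : SimpleGraph ℕ := ⊤

/-- The clique on continuum many vertices `K_𝔠`. -/
def Kcontinuum : SimpleGraph (Set ℕ) := ⊤

/-- `C` is hereditary: closed under induced subgraphs. -/
def Hereditary (C : GraphClass) : Prop :=
  ∀ (V : Type) (G : SimpleGraph V), C V G →
    ∀ (W : Type) (f : W → V), Function.Injective f → C W (G.comap f)

/-! ### Scattered sets and quasi-wideness -/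

/-- `X` is a `d`-scattered set of `G - S`: it avoids `S`, and any two distinct vertices of `X`
are at distance greater than `2d` in `G - S` (every connecting walk avoiding `S` is longer
than `2d`). -/
def ScatteredIn {V : Type} (G : SimpleGraph V) (d : ℕ) (S X : Set V) : Prop :=
  Disjoint X S ∧ ∀ u ∈ X, ∀ v ∈ X, u ≠ v →
    ∀ p : G.Walk u v, (∀ x ∈ p.support, x ∉ S) → 2 * d < p.length

/-- `C` is quasi-wide with margin `s`. -/
def QuasiWide (C : GraphClass) (s : ℕ → ℕ) : Prop :=
  ∀ d m : ℕ, ∃ N : ℕ, ∀ (V : Type) (G : SimpleGraph V), C V G → N ≤ Nat.card V →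
    ∃ S X : Set V, S.Finite ∧ S.ncard ≤ s d ∧ X.Finite ∧ X.ncard = m ∧ ScatteredIn G d S X

/-- `C` is uniformly quasi-wide with margin `s`. -/
def UniformlyQuasiWide (C : GraphClass) (s : ℕ → ℕ) : Prop :=
  ∀ d m : ℕ, ∃ N : ℕ, ∀ (V : Type) (G : SimpleGraph V), C V G →
    ∀ W : Set V, N ≤ W.ncard →
      ∃ S X : Set V, S.Finite ∧ S.ncard ≤ s d ∧ X ⊆ W ∧ X.Finite ∧ X.ncard = m ∧
        ScatteredIn G d S X

/-- `C` is limit quasi-wide. -/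
def LimitQW (U : Ultrafilter ℕ) (C : GraphClass) : Prop :=
  ∀ (d : ℕ) (V : Type) (G : SimpleGraph V), InLimit U C G → Infinite V →
    ∃ S X : Set V, S.Finite ∧ X.Infinite ∧ ScatteredIn G d S X

/-- `C` is uniformly limit quasi-wide. -/
def UniformLimitQW (U : Ultrafilter ℕ) (C : GraphClass) : Prop :=
  ∀ (d : ℕ) (V : Type) (G : SimpleGraph V), InLimit U C G →
    ∀ W : Set V, W.Infinite →
      ∃ S X : Set V, S.Finite ∧ X ⊆ W ∧ X.Infinite ∧ ScatteredIn G d S X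

/-- `C` is strongly limit quasi-wide with margin `s`. -/
def StrongLimitQW (U : Ultrafilter ℕ) (C : GraphClass) (s : ℕ → ℕ) : Prop :=
  ∀ (d : ℕ) (V : Type) (G : SimpleGraph V), InLimit U C G → Infinite V →
    ∃ S X : Set V, S.Finite ∧ S.ncard ≤ s d ∧ X.Infinite ∧ ScatteredIn G d S X

/-- `C` is strongly uniformly limit quasi-wide with margin `s`. -/
def StrongUniformLimitQW (U : Ultrafilter ℕ) (C : GraphClass) (s : ℕ → ℕ) : Prop :=
  ∀ (d : ℕ) (V : Type) (G : SimpleGraph V), InLimit U C G →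
    ∀ W : Set V, W.Infinite →
      ∃ S X : Set V, S.Finite ∧ S.ncard ≤ s d ∧ X ⊆ W ∧ X.Infinite ∧ ScatteredIn G d S X

/-! ### The splitter game -/

/-- One round of the splitter game: from arena `A`, connector picks `v`, splitter picks `W`;
the new arena consists of the vertices of `A` outside `W` at distance at most `d` from `v`
in the subgraph induced by `A`. -/
def arenaStep {V : Type} (G : SimpleGraph V) (d : ℕ) (A : Set V) (v : V) (W : Set V) : Set V :=
  {x | x ∈ A ∧ x ∉ W ∧ ∃ p : G.Walk v x, p.length ≤ d ∧ ∀ y ∈ p.support, y ∈ A}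

/-- The arena after a (chronological) history of moves. -/
def arenaAfter {V : Type} (G : SimpleGraph V) (d : ℕ) (hist : List (V × Set V)) : Set V :=
  hist.foldl (fun A mv => arenaStep G d A mv.1 mv.2) Set.univ

/-- A strategy for splitter: given the history and connector's new move, produce a set. -/
def SplitterStrategy (V : Type) : Type := List (V × Set V) → V → Set V

/-- The history of the play where connector plays `c` and splitter follows `σ`. -/
def splitterHist {V : Type} (σ : SplitterStrategy V) (c : ℕ → V) : ℕ → List (V × Set V)
  | 0 => []
  | n + 1 => splitterHist σ c n ++ [(c n, σ (splitterHist σ c n) (c n))]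

/-- Connector's first `n` moves are valid (inside the successive arenas). -/
def ConsistentPlay {V : Type} (G : SimpleGraph V) (d : ℕ) (σ : SplitterStrategy V)
    (c : ℕ → V) (n : ℕ) : Prop :=
  ∀ k < n, c k ∈ arenaAfter G d (splitterHist σ c k)

/-- `σ` is a winning strategy for splitter in the limit `d`-splitter game on `G`:
its moves are valid (finite subsets of the arena) along any consistent play, and no
infinite sequence of valid connector moves exists. -/
def SplitterWinsLimit {V : Type} (G : SimpleGraph V) (d : ℕ) (σ : SplitterStrategy V) : Prop :=
  (∀ (c : ℕ → V) (n : ℕ), ConsistentPlay G d σ c (n + 1) →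
      (σ (splitterHist σ c n) (c n)).Finite ∧
      σ (splitterHist σ c n) (c n) ⊆ arenaAfter G d (splitterHist σ c n)) ∧
  (∀ c : ℕ → V, ∃ n : ℕ, c n ∉ arenaAfter G d (splitterHist σ c n))

/-- `σ` is a winning strategy for splitter in the `(ℓ, m, d)`-splitter game on `G`. -/
def SplitterWinsGame {V : Type} (G : SimpleGraph V) (l m d : ℕ) (σ : SplitterStrategy V) :
    Prop :=
  (∀ (c : ℕ → V) (n : ℕ), ConsistentPlay G d σ c (n + 1) →
      (σ (splitterHist σ c n) (c n)).Finite ∧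
      (σ (splitterHist σ c n) (c n)).ncard ≤ m ∧
      σ (splitterHist σ c n) (c n) ⊆ arenaAfter G d (splitterHist σ c n)) ∧
  (∀ c : ℕ → V, ∃ n ≤ l, c n ∉ arenaAfter G d (splitterHist σ c n))

/-- A strategy for connector: given the history, produce a vertex. -/
def ConnectorStrategy (V : Type) : Type := List (V × Set V) → V

/-- The history of the play where connector follows `τ` and splitter plays `w`. -/
def connectorHist {V : Type} (τ : ConnectorStrategy V) (w : ℕ → Set V) :
    ℕ → List (V × Set V)
  | 0 => []
  | n + 1 => connectorHist τ w n ++ [(τ (connectorHist τ w n), w n)]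

/-- `τ` is a winning strategy for connector in the limit `d`-splitter game on `G`:
as long as splitter's moves are valid, connector's moves stay in the arena forever. -/
def ConnectorWinsLimit {V : Type} (G : SimpleGraph V) (d : ℕ) (τ : ConnectorStrategy V) :
    Prop :=
  ∀ (w : ℕ → Set V) (n : ℕ),
    (∀ k < n, (w k).Finite ∧ w k ⊆ arenaAfter G d (connectorHist τ w k)) →
    τ (connectorHist τ w n) ∈ arenaAfter G d (connectorHist τ w n)

/-- `τ` is a winning strategy for connector in the `(ℓ, m, d)`-splitter game on `G`:
the arena stays nonempty for `ℓ` rounds, i.e. connector has valid moves at rounds `0,…,ℓ`. -/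
def ConnectorWinsGame {V : Type} (G : SimpleGraph V) (l m d : ℕ) (τ : ConnectorStrategy V) :
    Prop :=
  ∀ (w : ℕ → Set V) (n : ℕ), n ≤ l →
    (∀ k < n, (w k).Finite ∧ (w k).ncard ≤ m ∧
      w k ⊆ arenaAfter G d (connectorHist τ w k)) →
    τ (connectorHist τ w n) ∈ arenaAfter G d (connectorHist τ w n)

/-- `C` is winning for splitter. -/
def WinningForSplitter (C : GraphClass) : Prop :=
  ∀ d : ℕ, ∃ l m : ℕ, ∀ (V : Type) (G : SimpleGraph V), C V G →
    ∃ σ : SplitterStrategy V, SplitterWinsGame G l m d σ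

/-- `C` is limit winning for splitter. -/
def LimitWinningForSplitter (U : Ultrafilter ℕ) (C : GraphClass) : Prop :=
  ∀ (d : ℕ) (V : Type) (G : SimpleGraph V), InLimit U C G →
    ∃ σ : SplitterStrategy V, SplitterWinsLimit G d σ

/-! ### First-order satisfaction in graphs -/

/-- `G` satisfies the first-order sentence `φ` in the language of graphs. -/
def GSat {V : Type} (G : SimpleGraph V) (φ : FirstOrder.Language.graph.Sentence) : Prop :=
  @FirstOrder.Language.Sentence.Realize FirstOrder.Language.graph V G.structure φ



/-- Lift a walk whose support lies in `V'` to the induced subgraph on `V'`. -/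
lemma lift_walk {V : Type} {G : SimpleGraph V} (V' : Set V) {a b : V} (p : G.Walk a b)
    (hp : ∀ y ∈ p.support, y ∈ V') :
    ∃ (ha : a ∈ V') (hb : b ∈ V')
      (q : (G.comap (Subtype.val : V' → V)).Walk ⟨a, ha⟩ ⟨b, hb⟩),
      q.length = p.length ∧ ∀ y ∈ q.support, (y : V) ∈ p.support := by
  induction p with
  | nil =>
    refine ⟨hp _ (by simp), hp _ (by simp), .nil, ?_, ?_⟩ <;> simp
  | @cons a c b h p ih =>
    obtain ⟨hc, hb, q, hq1, hq2⟩ := ih (fun y hy => hp y (by simp [hy]))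
    refine ⟨hp _ (by simp), hb, .cons (by exact h) q, by exact congrArg (· + 1) hq1, ?_⟩
    intro y hy
    replace hy : y = _ ∨ y ∈ q.support := List.mem_cons.mp hy
    rcases hy with rfl | hy
    · simp
    · simp [hq2 y hy]

/-- If `C` is limit quasi-wide, then `C` is limit topologically nowhere
dense: `K_ω ∉ C* ∇̃ ω`. -/
theorem qw_tnd (U : Ultrafilter ℕ) (hU : ∀ a : ℕ, {a} ∉ U)
    (C : GraphClass) (hfin : FiniteClass C) (hqw : LimitQW U C) :
    ¬ ∃ d : ℕ, InLimitTopMinor U C d Komega := by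
  rintro ⟨d, V, G, hGlim, f, P, hinj, hpath, hlen, hsymm, hdisj⟩
  classical
  -- the set of vertices on the topological-minor structure
  set V' : Set V := {v | ∃ (a b : ℕ) (h : Komega.Adj a b), v ∈ (P h).support} with hV'
  set G' : SimpleGraph V' := G.comap (Subtype.val : V' → V) with hG'
  -- basic facts about Komega
  have hKadj : ∀ {a b : ℕ}, a ≠ b → Komega.Adj a b := fun hab => hab
  -- f maps into V'
  have hfV' : ∀ u : ℕ, f u ∈ V' := by
    intro u
    exact ⟨u, u + 1, hKadj (by omega), SimpleGraph.Walk.start_mem_support _⟩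
  have hV'inf : Infinite V' := by
    refine Infinite.of_injective (fun u : ℕ => (⟨f u, hfV' u⟩ : V')) ?_
    intro u v huv
    exact hinj (congrArg Subtype.val huv)
  -- G' is in the class limit
  have hG'lim : InLimit U C G' := by
    obtain ⟨Vs, Gs, hCs, g, ginj, gadj⟩ := hGlim
    exact ⟨Vs, Gs, hCs, g ∘ Subtype.val, ginj.comp Subtype.val_injective,
      fun u v huv => gadj huv⟩
  obtain ⟨S, X, hSfin, hXinf, hXS, hscat⟩ := hqw (3 * d + 2) V' G' hG'lim hV'inf
  set S₀ : Set V := Subtype.val '' S with hS₀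
  have hS₀fin : S₀.Finite := hSfin.image _
  -- transferring membership along equal edges
  have hsame : ∀ {a b a' b' : ℕ} (h : Komega.Adj a b) (h' : Komega.Adj a' b'),
      s(a, b) = s(a', b') → ∀ x : V, x ∈ (P h).support → x ∈ (P h').support := by
    intro a b a' b' h h' he x hx
    rcases Sym2.eq_iff.mp he with ⟨rfl, rfl⟩ | ⟨rfl, rfl⟩
    · exact hx
    · have : P h' = (P h).reverse := hsymm h
      rw [this, SimpleGraph.Walk.support_reverse, List.mem_reverse]
      exact hx
  -- the bad vertex set Z
  set Z : Set V := {x | ∃ (a b : ℕ) (h : Komega.Adj a b) (w : V),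
    w ∈ S₀ ∧ w ∈ (P h).support ∧ w ≠ f a ∧ w ≠ f b ∧ x ∈ (P h).support} with hZ
  have hZfin : Z.Finite := by
    have hsub : Z ⊆ ⋃ w ∈ S₀, {x | ∃ (a b : ℕ) (h : Komega.Adj a b),
        w ∈ (P h).support ∧ w ≠ f a ∧ w ≠ f b ∧ x ∈ (P h).support} := by
      rintro x ⟨a, b, h, w, hw1, hw2, hw3, hw4, hx⟩
      exact Set.mem_biUnion hw1 ⟨a, b, h, hw2, hw3, hw4, hx⟩
    refine Set.Finite.subset (Set.Finite.biUnion hS₀fin fun w hw => ?_) hsub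
    by_cases hex : ∃ (a b : ℕ) (h : Komega.Adj a b),
        w ∈ (P h).support ∧ w ≠ f a ∧ w ≠ f b
    · obtain ⟨a₀, b₀, h₀, hm₀, hn₀, hn₀'⟩ := hex
      refine Set.Finite.subset (List.finite_toSet (P h₀).support) ?_
      rintro x ⟨a, b, h, hm, hn, hn', hx⟩
      by_cases he : s(a, b) = s(a₀, b₀)
      · exact hsame h h₀ he x hx
      · exact absurd ((hdisj h h₀ he w hm hm₀).1) (by tauto)
    · refine Set.Finite.subset (Set.finite_empty) ?_
      rintro x ⟨a, b, h, hm, hn, hn', hx⟩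
      exact absurd ⟨a, b, h, hm, hn, hn'⟩ hex
  -- the set of paths with both endpoints in S₀
  set Z₂ : Set V := {x | ∃ (a b : ℕ) (h : Komega.Adj a b),
    f a ∈ S₀ ∧ f b ∈ S₀ ∧ x ∈ (P h).support} with hZ₂
  have hBfin : {u : ℕ | f u ∈ S₀}.Finite := by
    have : {u : ℕ | f u ∈ S₀} = f ⁻¹' S₀ := rfl
    rw [this]
    exact Set.Finite.preimage hinj.injOn hS₀fin
  have hZ₂fin : Z₂.Finite := by
    have hsub : Z₂ ⊆ ⋃ a ∈ {u : ℕ | f u ∈ S₀}, ⋃ b ∈ {u : ℕ | f u ∈ S₀},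
        {x | ∃ h : Komega.Adj a b, x ∈ (P h).support} := by
      rintro x ⟨a, b, h, ha, hb, hx⟩
      exact Set.mem_biUnion ha (Set.mem_biUnion hb ⟨h, hx⟩)
    refine Set.Finite.subset (Set.Finite.biUnion hBfin fun a _ =>
      Set.Finite.biUnion hBfin fun b _ => ?_) hsub
    by_cases hab : Komega.Adj a b
    · refine Set.Finite.subset (List.finite_toSet (P hab).support) ?_
      rintro x ⟨h, hx⟩
      exact hx
    · refine Set.Finite.subset (Set.finite_empty) ?_
      rintro x ⟨h, hx⟩
      exact absurd h hab
  -- the set of endpoints of bad edges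
  set BadEnd : Set ℕ := {u | ∃ (b : ℕ) (h : Komega.Adj u b) (w : V),
    w ∈ S₀ ∧ w ∈ (P h).support ∧ w ≠ f u ∧ w ≠ f b} with hBadEnd
  have hBEfin : BadEnd.Finite := by
    have hsub : BadEnd ⊆ ⋃ w ∈ S₀, {u : ℕ | ∃ (b : ℕ) (h : Komega.Adj u b),
        w ∈ (P h).support ∧ w ≠ f u ∧ w ≠ f b} := by
      rintro u ⟨b, h, w, hw1, hw2, hw3, hw4⟩
      exact Set.mem_biUnion hw1 ⟨b, h, hw2, hw3, hw4⟩
    refine Set.Finite.subset (Set.Finite.biUnion hS₀fin fun w hw => ?_) hsub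
    by_cases hex : ∃ (a b : ℕ) (h : Komega.Adj a b),
        w ∈ (P h).support ∧ w ≠ f a ∧ w ≠ f b
    · obtain ⟨a₀, b₀, h₀, hm₀, hn₀, hn₀'⟩ := hex
      refine Set.Finite.subset ((Set.finite_singleton b₀).insert a₀) ?_
      rintro u ⟨b, h, hm, hn, hn'⟩
      by_cases he : s(u, b) = s(a₀, b₀)
      · rcases Sym2.eq_iff.mp he with ⟨rfl, rfl⟩ | ⟨rfl, rfl⟩
        · exact Set.mem_insert _ _
        · exact Set.mem_insert_of_mem _ rfl
      · exact absurd ((hdisj h h₀ he w hm hm₀).1) (by tauto)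
    · refine Set.Finite.subset (Set.finite_empty) ?_
      rintro u ⟨b, h, hm, hn, hn'⟩
      exact absurd ⟨u, b, h, hm, hn, hn'⟩ hex
  -- the good part of X
  set X'' : Set V' := X \ (Subtype.val ⁻¹' (Z ∪ Z₂)) with hX''
  have hX''inf : X''.Infinite :=
    hXinf.diff (Set.Finite.preimage Subtype.val_injective.injOn (hZfin.union hZ₂fin))
  have hX''X : X'' ⊆ X := Set.diff_subset
  have hXnotS₀ : ∀ x : V', x ∈ X → (x : V) ∉ S₀ := by
    intro x hx hmem
    obtain ⟨y, hyS, hyx⟩ := hmem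
    have : y = x := Subtype.val_injective hyx
    exact absurd hx (fun h => (Set.disjoint_left.mp hXS h) (this ▸ hyS))
  -- anchors
  have hanchor : ∀ x : V', x ∈ X'' → ∃ (u : ℕ) (q : G.Walk (x : V) (f u)),
      q.length ≤ 2 * d + 1 ∧ ∀ y ∈ q.support, y ∈ V' ∧ y ∉ S₀ := by
    intro x hx
    obtain ⟨a, b, h, hmem⟩ := x.2
    have hxX : x ∈ X := hX''X hx
    have hxS₀ : (x : V) ∉ S₀ := hXnotS₀ x hxX
    have hxZ : (x : V) ∉ Z := fun hc => hx.2 (Set.mem_union_left _ hc)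
    have hxZ₂ : (x : V) ∉ Z₂ := fun hc => hx.2 (Set.mem_union_right _ hc)
    have key : ∀ (a b : ℕ) (h : Komega.Adj a b), (x : V) ∈ (P h).support →
        f b ∉ S₀ → ∃ (u : ℕ) (q : G.Walk (x : V) (f u)),
        q.length ≤ 2 * d + 1 ∧ ∀ y ∈ q.support, y ∈ V' ∧ y ∉ S₀ := by
      intro a b h hmem hbS
      refine ⟨b, (P h).dropUntil _ hmem,
        le_trans (SimpleGraph.Walk.length_dropUntil_le _ hmem) (hlen h), ?_⟩
      intro y hy
      have hyP : y ∈ (P h).support := SimpleGraph.Walk.support_dropUntil_subset _ hmem hy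
      refine ⟨⟨a, b, h, hyP⟩, ?_⟩
      intro hyS
      have hcases : y = f a ∨ y = f b := by
        by_contra hc
        push_neg at hc
        exact hxZ ⟨a, b, h, y, hyS, hyP, hc.1, hc.2, hmem⟩
      rcases hcases with rfl | rfl
      · -- y = f a, show f a ∉ support of dropUntil
        by_cases hxa : (x : V) = f a
        · exact hxS₀ (hxa ▸ hyS)
        · -- nodup argument
          have hnd := (hpath h).support_nodup
          have hspec := SimpleGraph.Walk.take_spec (P h) hmem
          have hsupp : (P h).support =
              ((P h).takeUntil _ hmem).support ++
                ((P h).dropUntil _ hmem).support.tail := by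
            conv_lhs => rw [← hspec]
            exact SimpleGraph.Walk.support_append _ _
          rw [hsupp, List.nodup_append] at hnd
          have hfa_take : f a ∈ ((P h).takeUntil _ hmem).support :=
            SimpleGraph.Walk.start_mem_support _
          have : f a ∈ ((P h).dropUntil _ hmem).support.tail := by
            have := hy
            rw [SimpleGraph.Walk.support_eq_cons] at this
            rcases List.mem_cons.mp this with h1 | h1
            · exact absurd h1.symm hxa
            · exact h1
          exact hnd.2.2 _ hfa_take _ this rfl
      · exact hbS hyS
    by_cases hbS : f b ∈ S₀
    · have haS : f a ∉ S₀ := by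
        intro haS
        exact hxZ₂ ⟨a, b, h, haS, hbS, hmem⟩
      have hmem' : (x : V) ∈ (P h.symm).support := by
        rw [hsymm h, SimpleGraph.Walk.support_reverse, List.mem_reverse]
        exact hmem
      exact key b a h.symm hmem' haS
    · exact key a b h hmem hbS
  -- the anchor function
  set anch : V' → ℕ := fun x =>
    if hx : ∃ (u : ℕ) (q : G.Walk (x : V) (f u)),
        q.length ≤ 2 * d + 1 ∧ ∀ y ∈ q.support, y ∈ V' ∧ y ∉ S₀
    then hx.choose else 0 with hanchdef
  have hanch : ∀ x : V', x ∈ X'' → ∃ q : G.Walk (x : V) (f (anch x)),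
      q.length ≤ 2 * d + 1 ∧ ∀ y ∈ q.support, y ∈ V' ∧ y ∉ S₀ := by
    intro x hx
    have hex := hanchor x hx
    have heq : anch x = hex.choose := by rw [hanchdef]; exact dif_pos hex
    rw [heq]
    exact hex.choose_spec
  -- the scatteredness, applied to walks in G
  have hfar : ∀ x : V', x ∈ X'' → ∀ x' : V', x' ∈ X'' → x ≠ x' →
      ∀ p : G.Walk (x : V) (x' : V), (∀ y ∈ p.support, y ∈ V' ∧ y ∉ S₀) →
      2 * (3 * d + 2) < p.length := by
    intro x hx x' hx' hne p hp
    obtain ⟨ha, hb, q, hq1, hq2⟩ := lift_walk V' p (fun y hy => (hp y hy).1)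
    have hSavoid : ∀ y ∈ q.support, y ∉ S := by
      intro y hy hyS
      exact (hp _ (hq2 y hy)).2 ⟨y, hyS, rfl⟩
    have hlt := hscat x (hX''X hx) x' (hX''X hx') hne q hSavoid
    rw [hq1] at hlt
    exact hlt
  -- final case analysis
  by_cases hcase : ∃ u : ℕ, {x ∈ X'' | anch x = u}.Infinite
  · obtain ⟨u, hu⟩ := hcase
    obtain ⟨x, hx, x', hx', hne⟩ := hu.nontrivial
    have h1 := hanch x hx.1
    rw [hx.2] at h1
    obtain ⟨q, hq1, hq2⟩ := h1
    have h1' := hanch x' hx'.1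
    rw [hx'.2] at h1'
    obtain ⟨q', hq1', hq2'⟩ := h1'
    have hpsup : ∀ y ∈ (q.append q'.reverse).support, y ∈ V' ∧ y ∉ S₀ := by
      intro y hy
      rw [SimpleGraph.Walk.mem_support_append_iff] at hy
      rcases hy with hy | hy
      · exact hq2 y hy
      · rw [SimpleGraph.Walk.support_reverse, List.mem_reverse] at hy
        exact hq2' y hy
    have hlt := hfar x hx.1 x' hx'.1 hne (q.append q'.reverse) hpsup
    rw [SimpleGraph.Walk.length_append, SimpleGraph.Walk.length_reverse] at hlt
    omega
  · push_neg at hcase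
    have himg : (anch '' X'').Infinite := by
      intro hfin
      apply hX''inf
      have hsub : X'' ⊆ ⋃ u ∈ anch '' X'', {x ∈ X'' | anch x = u} := fun x hx =>
        Set.mem_biUnion (Set.mem_image_of_mem _ hx) ⟨hx, rfl⟩
      exact Set.Finite.subset
        (Set.Finite.biUnion hfin fun u _ => (hcase u)) hsub
    obtain ⟨u, hu, u', hu', hneu⟩ := (himg.diff hBEfin).nontrivial
    obtain ⟨x, hxX, hxu⟩ := hu.1
    obtain ⟨x', hxX', hxu'⟩ := hu'.1
    have hnex : x ≠ x' := fun h => hneu (by rw [← hxu, ← hxu', h])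
    have hmid : Komega.Adj u u' := hKadj hneu
    have h1 := hanch x hxX
    rw [hxu] at h1
    obtain ⟨q, hq1, hq2⟩ := h1
    have h1' := hanch x' hxX'
    rw [hxu'] at h1'
    obtain ⟨q', hq1', hq2'⟩ := h1'
    have hfu : f u ∉ S₀ := (hq2 _ (SimpleGraph.Walk.end_mem_support _)).2
    have hfu' : f u' ∉ S₀ := (hq2' _ (SimpleGraph.Walk.end_mem_support _)).2
    have hmidS : ∀ y ∈ (P hmid).support, y ∉ S₀ := by
      intro y hy hyS
      have hyc : y = f u ∨ y = f u' := by
        by_contra hc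
        push_neg at hc
        exact hu.2 ⟨u', hmid, y, hyS, hy, hc.1, hc.2⟩
      rcases hyc with rfl | rfl
      · exact hfu hyS
      · exact hfu' hyS
    have hpsup : ∀ y ∈ (q.append ((P hmid).append q'.reverse)).support,
        y ∈ V' ∧ y ∉ S₀ := by
      intro y hy
      rw [SimpleGraph.Walk.mem_support_append_iff,
        SimpleGraph.Walk.mem_support_append_iff] at hy
      rcases hy with hy | hy | hy
      · exact hq2 y hy
      · exact ⟨⟨u, u', hmid, hy⟩, hmidS y hy⟩
      · rw [SimpleGraph.Walk.support_reverse, List.mem_reverse] at hy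
        exact hq2' y hy
    have hlt := hfar x hxX x' hxX' hnex (q.append ((P hmid).append q'.reverse)) hpsup
    rw [SimpleGraph.Walk.length_append, SimpleGraph.Walk.length_append,
      SimpleGraph.Walk.length_reverse] at hlt
    have hmidlen := hlen hmid
    omega


end NWD
end

section
/- If a class C of finite graphs is limit nowhere dense (K_ω ∉ C*▽ω), then there exists a function s : ℕ → ℕ such that C is strongly uniformly limit quasi-wide with margin s: for every d ∈ ℕ, every graph G ∈ C*, and every infinite set W ⊆ V(G), there exists a set S ⊆ V(G) with |S| ≤ s(d) such that G−S contains an infinite d-scattered set contained in W. -/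
namespace NWD

open SimpleGraph Filter

section Aux

variable {V : Type} {G : SimpleGraph V}

/-- Turn a "lazy walk" (consecutive vertices equal or adjacent) into a genuine walk. -/
lemma lazy_walk (f : ℕ → V) :
    ∀ (k : ℕ), (∀ i < k, f i = f (i + 1) ∨ G.Adj (f i) (f (i + 1))) →
      ∃ p : G.Walk (f 0) (f k), p.length ≤ k ∧ ∀ x ∈ p.support, ∃ i ≤ k, f i = x := by
  intro k
  induction k with
  | zero =>
    intro _
    exact ⟨Walk.nil, by simp, by simp⟩
  | succ k ih =>
    intro h
    obtain ⟨p, hlen, hsup⟩ := ih (fun i hi => h i (Nat.lt_succ_of_lt hi))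
    rcases h k (Nat.lt_succ_self k) with he | ha
    · refine ⟨p.copy rfl he, ?_, ?_⟩
      · simpa using Nat.le_succ_of_le hlen
      · intro x hx
        rw [Walk.support_copy] at hx
        obtain ⟨i, hi, rfl⟩ := hsup x hx
        exact ⟨i, Nat.le_succ_of_le hi, rfl⟩
    · refine ⟨p.append (Walk.cons ha Walk.nil), ?_, ?_⟩
      · rw [Walk.length_append]
        simpa using hlen
      · intro x hx
        rw [Walk.mem_support_append_iff] at hx
        rcases hx with hx | hx
        · obtain ⟨i, hi, rfl⟩ := hsup x hx
          exact ⟨i, Nat.le_succ_of_le hi, rfl⟩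
        · simp only [Walk.support_cons, Walk.support_nil, List.mem_cons,
            List.mem_singleton, List.not_mem_nil, or_false] at hx
          rcases hx with hx | hx
          · exact ⟨k, Nat.le_succ k, hx.symm⟩
          · exact ⟨k + 1, le_refl _, hx.symm⟩

/-- Transfer a walk in the coercion of a subgraph into a larger subgraph. -/
lemma walk_transfer {H H' : G.Subgraph} (hle : H ≤ H') {a b : V}
    (ha : a ∈ H.verts) (hb : b ∈ H.verts) (q : H.coe.Walk ⟨a, ha⟩ ⟨b, hb⟩) :
    ∃ q' : H'.coe.Walk ⟨a, hle.1 ha⟩ ⟨b, hle.1 hb⟩, q'.length = q.length := by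
  let f : H.coe →g H'.coe :=
    ⟨fun x => ⟨x.1, hle.1 x.2⟩, by
      intro x y hxy
      exact hle.2 hxy⟩
  refine ⟨(q.map f).copy (by rfl) (by rfl), by simp⟩

/-- For any vertex on a walk, there is a short walk to it inside the walk's subgraph. -/
lemma walk_to_toSubgraph : ∀ {a b : V} (p : G.Walk a b) (x : V) (hx : x ∈ p.support),
    ∃ q : p.toSubgraph.coe.Walk ⟨a, p.start_mem_verts_toSubgraph⟩
      ⟨x, (p.mem_verts_toSubgraph).2 hx⟩, q.length ≤ p.length := by
  intro a b p
  induction p with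
  | nil =>
    intro x hx
    simp only [Walk.support_nil, List.mem_singleton] at hx
    subst hx
    exact ⟨Walk.nil, by simp⟩
  | @cons a c b hadj p ih =>
    intro x hx
    simp only [Walk.support_cons, List.mem_cons] at hx
    by_cases hxa : x = a
    · subst hxa
      exact ⟨Walk.nil.copy rfl (Subtype.ext rfl), by simp⟩
    · have hx' : x ∈ p.support := by
        rcases hx with h | h
        · exact absurd h.symm (fun hh => hxa hh.symm)
        · exact h
      obtain ⟨q, hq⟩ := ih x hx'
      have hle : p.toSubgraph ≤ (Walk.cons hadj p).toSubgraph := by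
        simp only [Walk.toSubgraph]
        exact le_sup_right
      obtain ⟨q', hq'⟩ := walk_transfer hle _ _ q
      have hac : (Walk.cons hadj p).toSubgraph.Adj a c := by
        simp only [Walk.toSubgraph, Subgraph.sup_adj]
        left
        simp [subgraphOfAdj_adj]
      have hav : a ∈ (Walk.cons hadj p).toSubgraph.verts := (Walk.cons hadj p).start_mem_verts_toSubgraph
      refine ⟨(Walk.cons (by exact hac) (q'.copy (Subtype.ext rfl) rfl)).copy (Subtype.ext rfl) (Subtype.ext rfl), ?_⟩
      simp only [Walk.length_copy, Walk.length_cons]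
      show Walk.length _ + 1 ≤ _
      rw [Walk.length_copy]
      omega

/-- First-hit splitting: a walk from outside `T` to inside `T` has a prefix reaching the
boundary. -/
lemma first_hit {T : Set V} : ∀ {a b : V} (q : G.Walk a b), a ∉ T → b ∈ T →
    ∃ (c z : V) (q' : G.Walk a c), G.Adj c z ∧ z ∈ T ∧ q'.length + 1 ≤ q.length ∧
      (∀ x ∈ q'.support, x ∉ T) ∧ (∀ x ∈ q'.support, x ∈ q.support) := by
  intro a b q
  induction q with
  | nil => intro ha hb; exact absurd hb ha
  | @cons a c b hadj p ih =>
    intro ha hb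
    by_cases hc : c ∈ T
    · refine ⟨a, c, Walk.nil, hadj, hc, by simp, ?_, ?_⟩
      · intro x hx
        simp only [Walk.support_nil, List.mem_singleton] at hx
        subst hx; exact ha
      · intro x hx
        simp only [Walk.support_nil, List.mem_singleton] at hx
        subst hx; simp [Walk.support_cons]
    · obtain ⟨c', z, q', hadj', hz, hlen, hT, hsub⟩ := ih hc hb
      refine ⟨c', z, Walk.cons hadj q', hadj', hz, by simp; omega, ?_, ?_⟩
      · intro x hx
        simp only [Walk.support_cons, List.mem_cons] at hx
        rcases hx with rfl | hx
        · exact ha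
        · exact hT x hx
      · intro x hx
        simp only [Walk.support_cons, List.mem_cons] at hx ⊢
        rcases hx with rfl | hx
        · exact Or.inl rfl
        · exact Or.inr (hsub x hx)

/-- Short connection avoiding `S`. -/
def near (G : SimpleGraph V) (S : Set V) (r : ℕ) (u v : V) : Prop :=
  ∃ p : G.Walk u v, p.length ≤ r ∧ ∀ x ∈ p.support, x ∉ S

lemma near.symm {S : Set V} {r : ℕ} {u v : V} (h : near G S r u v) : near G S r v u := by
  obtain ⟨p, h1, h2⟩ := h
  exact ⟨p.reverse, by simpa using h1, by simpa [Walk.support_reverse] using h2⟩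

lemma near_mono_S {S S' : Set V} (hss : S ⊆ S') {r : ℕ} {u v : V} (h : near G S' r u v) :
    near G S r u v := by
  obtain ⟨p, h1, h2⟩ := h
  exact ⟨p, h1, fun x hx hxS => h2 x hx (hss hxS)⟩

lemma near_mono_r {S : Set V} {r r' : ℕ} (hrr : r ≤ r') {u v : V} (h : near G S r u v) :
    near G S r' u v := by
  obtain ⟨p, h1, h2⟩ := h
  exact ⟨p, le_trans h1 hrr, h2⟩

lemma near_zero {S : Set V} {u v : V} (h : near G S 0 u v) : u = v := by
  obtain ⟨p, h1, _⟩ := h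
  cases p with
  | nil => rfl
  | cons _ _ => simp at h1

lemma near_suffix {S : Set V} {r : ℕ} {u v x : V} {p : G.Walk u v}
    (hlen : p.length ≤ r + 1) (hS : ∀ y ∈ p.support, y ∉ S)
    (hx : x ∈ p.support) (hxu : x ≠ u) : near G S r x v := by
  classical
  refine ⟨p.dropUntil x hx, ?_, ?_⟩
  · have hspec := p.take_spec hx
    have hlen2 : (p.takeUntil x hx).length + (p.dropUntil x hx).length = p.length := by
      rw [← Walk.length_append, hspec]
    have hpos : 0 < (p.takeUntil x hx).length := by
      by_contra hz
      push_neg at hz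
      interval_cases h : (p.takeUntil x hx).length
      · exact hxu ((p.takeUntil x hx).eq_of_length_eq_zero h).symm
    omega
  · intro y hy
    exact hS y (p.support_dropUntil_subset hx hy)

section UF

variable {U : Ultrafilter ℕ}

lemma finite_not_mem_U (hU : ∀ a : ℕ, {a} ∉ U) {s : Set ℕ} (hs : s.Finite) : s ∉ U := by
  refine Set.Finite.induction_on _ hs U.empty_notMem ?_
  intro a t _ _ ih h
  rw [Set.insert_eq] at h
  rcases Ultrafilter.union_mem_iff.mp h with h | h
  · exact hU a h
  · exact ih h

lemma finite_biUnion_not_mem_U {ι : Type*} {s : Set ι} (hs : s.Finite) (f : ι → Set ℕ)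
    (hf : ∀ i ∈ s, f i ∉ U) : (⋃ i ∈ s, f i) ∉ U := by
  induction s, hs using Set.Finite.induction_on with
  | empty => simp only [Set.mem_empty_iff_false, Set.iUnion_of_empty, Set.iUnion_empty]; exact U.empty_notMem
  | @insert a t ha hft ih =>
    intro h
    rw [Set.biUnion_insert] at h
    rcases Ultrafilter.union_mem_iff.mp h with h | h
    · exact hf a (Set.mem_insert a t) h
    · exact ih (fun i hi => hf i (Set.mem_insert_of_mem a hi)) h

lemma good_index_exists {A : Set ℕ} (hA : A ∈ U) {ι : Type*} {s : Set ι} (hs : s.Finite)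
    (f : ι → Set ℕ) (hf : ∀ i ∈ s, f i ∉ U) : ∃ n ∈ A, ∀ i ∈ s, n ∉ f i := by
  have h1 : (⋃ i ∈ s, f i) ∉ U := finite_biUnion_not_mem_U hs f hf
  have h2 : (⋃ i ∈ s, f i)ᶜ ∈ U := Ultrafilter.compl_mem_iff_notMem.mpr h1
  have h3 : A ∩ (⋃ i ∈ s, f i)ᶜ ∈ U := Filter.inter_mem hA h2
  obtain ⟨n, hn1, hn2⟩ := Filter.nonempty_of_mem h3
  refine ⟨n, hn1, fun i hi hni => ?_⟩
  exact hn2 (Set.mem_biUnion hi hni)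

end UF

/-- A bundled walk: a start, an end, and a walk between them. -/
abbrev BWalk (G : SimpleGraph V) := (a : V) × (x : V) × G.Walk a x

/-- The subgraph spanned by a center `c` and a list of bundled walks. -/
def tripleSubgraph (G : SimpleGraph V) (c : V) (L : List (BWalk G)) :
    G.Subgraph where
  verts := {c} ∪ {x | ∃ w ∈ L, x ∈ w.2.2.support}
  Adj x y := ∃ w ∈ L, w.2.2.toSubgraph.Adj x y
  adj_sub := by rintro x y ⟨w, _, h⟩; exact w.2.2.toSubgraph.adj_sub h
  edge_vert := by
    rintro x y ⟨w, hw, h⟩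
    exact Or.inr ⟨w, hw, (w.2.2.mem_verts_toSubgraph).1 (w.2.2.toSubgraph.edge_vert h)⟩
  symm := by constructor; rintro x y ⟨w, hw, h⟩; exact ⟨w, hw, h.symm⟩

lemma tripleSubgraph_verts_finite (c : V) (L : List (BWalk G)) :
    (tripleSubgraph G c L).verts.Finite := by
  refine Set.Finite.union (Set.finite_singleton c) ?_
  have : {x | ∃ w ∈ L, x ∈ w.2.2.support} = ⋃ w ∈ {w | w ∈ L}, {x | x ∈ w.2.2.support} := by
    ext x; simp
  rw [this]
  exact Set.Finite.biUnion L.finite_toSet (fun w _ => w.2.2.support.finite_toSet)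

lemma tripleSubgraph_walk {c : V} {L : List (BWalk G)}
    {w : BWalk G} (hw : w ∈ L) (hst : w.1 = c) {x : V} (hx : x ∈ w.2.2.support) :
    ∃ q : (tripleSubgraph G c L).coe.Walk ⟨c, Or.inl rfl⟩ ⟨x, Or.inr ⟨w, hw, hx⟩⟩,
      q.length ≤ w.2.2.length := by
  obtain ⟨q, hq⟩ := walk_to_toSubgraph w.2.2 x hx
  have hle : w.2.2.toSubgraph ≤ tripleSubgraph G c L := by
    constructor
    · intro y hy
      exact Or.inr ⟨w, hw, (w.2.2.mem_verts_toSubgraph).1 hy⟩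
    · intro a b h
      exact ⟨w, hw, h⟩
  obtain ⟨q', hq'⟩ := walk_transfer hle _ _ q
  refine ⟨(q'.copy (Subtype.ext hst) (Subtype.ext rfl)), by rw [Walk.length_copy]; omega⟩

section Clique

variable {U : Ultrafilter ℕ}

/-- Invariant for the greedy construction of a clique minor from heavy vertices. -/
def GoodWalks (G : SimpleGraph V) (S : Set V) (r : ℕ) {m : ℕ} (v : Fin m → V)
    (done : List (Fin m × Fin m)) (walks : Fin m → List (BWalk G)) :
    Prop :=
  (∀ i, ∀ w ∈ walks i, w.1 = v i) ∧
  (∀ i, ∀ w ∈ walks i, w.2.2.length ≤ r + 1 ∧ ∀ x ∈ w.2.2.support, x ∉ S) ∧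
  (∀ i j, i ≠ j → ∀ w ∈ walks i, ∀ w' ∈ walks j, ∀ x ∈ w.2.2.support,
    x ∉ w'.2.2.support) ∧
  (∀ i j, i ≠ j → ∀ w ∈ walks j, v i ∉ w.2.2.support) ∧
  (∀ p ∈ done, p.1 ≠ p.2 → ∃ w ∈ walks p.1, ∃ w' ∈ walks p.2,
    ∃ x ∈ w.2.2.support, ∃ y ∈ w'.2.2.support, G.Adj x y)

lemma goodWalks_exists (hU : ∀ a : ℕ, {a} ∉ U)
    (G : SimpleGraph V) (S : Set V) (r : ℕ)
    (e : ℕ → V) (he : Function.Injective e)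
    (H1 : ∀ v, v ∉ S → {n | near G S r v (e n)} ∉ U)
    (m : ℕ) (v : Fin m → V) (hv : Function.Injective v) (hvS : ∀ i, v i ∉ S)
    (H2 : ∀ i, {n | near G S (r + 1) (v i) (e n)} ∈ U) :
    ∀ done : List (Fin m × Fin m), ∃ walks, GoodWalks G S r v done walks := by
  classical
  intro done
  induction done with
  | nil =>
    refine ⟨fun _ => [], ?_, ?_, ?_, ?_, ?_⟩ <;> simp
  | cons pr done ih =>
    obtain ⟨walks, G0, G1, G2, G3, G4⟩ := ih
    by_cases hij' : pr.1 = pr.2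
    · exact ⟨walks, G0, G1, G2, G3, by
        intro p hp hpne
        rcases List.mem_cons.mp hp with rfl | hp
        · exact absurd hij' hpne
        · exact G4 p hp hpne⟩
    obtain ⟨i, j⟩ := pr
    simp only at hij'
    have hij : i ≠ j := hij'
    -- the set of used vertices
    set F : Set V := Set.range v ∪ ⋃ k, ⋃ w ∈ {w | w ∈ walks k}, {x | x ∈ w.2.2.support}
      with hF_def
    have hF : F.Finite := by
      refine Set.Finite.union (Set.finite_range v) (Set.finite_iUnion fun k => ?_)
      exact Set.Finite.biUnion (walks k).finite_toSet (fun w _ => w.2.2.support.finite_toSet)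
    have hsupF : ∀ k, ∀ w ∈ walks k, ∀ x ∈ w.2.2.support, x ∈ F := by
      intro k w hw x hx
      exact Or.inr (Set.mem_iUnion.mpr ⟨k, Set.mem_biUnion hw hx⟩)
    have hvF : ∀ k, v k ∈ F := fun k => Or.inl ⟨k, rfl⟩
    have hFS : ∀ f ∈ F, f ∉ S := by
      rintro f (⟨k, rfl⟩ | hf)
      · exact hvS k
      · obtain ⟨s, ⟨k, rfl⟩, hs⟩ := hf
        simp only [Set.mem_iUnion] at hs
        obtain ⟨w, hw, hx⟩ := hs
        exact (G1 k w hw).2 f hx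
    -- choose a fresh connection target
    have hA : ({n | near G S (r + 1) (v i) (e n)} ∩ {n | near G S (r + 1) (v j) (e n)})
        ∩ {n | e n ∈ F}ᶜ ∈ U := by
      refine Filter.inter_mem (Filter.inter_mem (H2 i) (H2 j)) ?_
      refine Ultrafilter.compl_mem_iff_notMem.mpr (finite_not_mem_U hU ?_)
      have : {n | e n ∈ F} = e ⁻¹' F := rfl
      rw [this]
      exact Set.Finite.preimage (Set.injOn_of_injective he) hF
    obtain ⟨n, hn, hnfar⟩ := good_index_exists hA hF
      (fun f => {n | near G S r f (e n)}) (fun f hf => H1 f (hFS f hf))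
    obtain ⟨⟨hni, hnj⟩, hnF⟩ := hn
    set y := e n with hy_def
    have hyF : y ∉ F := hnF
    have hyfar : ∀ f ∈ F, ¬ near G S r f y := fun f hf hnear => hnfar f hf hnear
    -- the two connecting walks
    obtain ⟨p, hplen, hpS⟩ := hni
    obtain ⟨q, hqlen, hqS⟩ := hnj
    have hPiF : ∀ x ∈ p.support, x ≠ v i → x ∉ F := by
      intro x hx hxvi hxF
      exact hyfar x hxF (near_suffix hplen hpS hx hxvi)
    have hQjF : ∀ x ∈ q.support, x ≠ v j → x ∉ F := by
      intro x hx hxvj hxF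
      exact hyfar x hxF (near_suffix hqlen hqS hx hxvj)
    have hvj_notin_p : v j ∉ p.support := by
      intro hmem
      have : v j ≠ v i := fun hh => hij (hv hh).symm
      exact hPiF (v j) hmem this (hvF j)
    obtain ⟨c, z, q', hcz, hzT, hq'len, hq'T, hq'sub⟩ :=
      first_hit (T := {x | x ∈ p.support}) q hvj_notin_p (by exact p.end_mem_support)
    have hq'S : ∀ x ∈ q'.support, x ∉ S := fun x hx => hqS x (hq'sub x hx)
    have hq'F : ∀ x ∈ q'.support, x ≠ v j → x ∉ F :=
      fun x hx hxvj => hQjF x (hq'sub x hx) hxvj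
    -- update the walk lists
    set wp : BWalk G := ⟨v i, y, p⟩ with hwp_def
    set wq : BWalk G := ⟨v j, c, q'⟩ with hwq_def
    set walks' : Fin m → List (BWalk G) :=
      fun k => if k = i then wp :: walks i else if k = j then wq :: walks j else walks k
      with hwalks'_def
    have hwi : walks' i = wp :: walks i := by
      rw [hwalks'_def]; simp
    have hwj : walks' j = wq :: walks j := by
      rw [hwalks'_def]; simp [hij.symm]
    have hwk : ∀ k, k ≠ i → k ≠ j → walks' k = walks k := by
      intro k hki hkj
      rw [hwalks'_def]; simp [hki, hkj]
    have hsub : ∀ k, ∀ w ∈ walks k, w ∈ walks' k := by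
      intro k w hw
      by_cases hki : k = i
      · rw [hki, hwi]; exact List.mem_cons_of_mem _ (hki ▸ hw)
      by_cases hkj : k = j
      · rw [hkj, hwj]; exact List.mem_cons_of_mem _ (hkj ▸ hw)
      · rw [hwk k hki hkj]; exact hw
    -- disjointness helpers
    have hold_p : ∀ k', k' ≠ i → ∀ w' ∈ walks k', ∀ x ∈ p.support,
        x ∉ w'.2.2.support := by
      intro k' hk' w' hw' x hxp hxw'
      by_cases hxvi : x = v i
      · subst hxvi
        exact G3 i k' (fun h => hk' h.symm) w' hw' hxw'
      · exact hPiF x hxp hxvi (hsupF k' w' hw' x hxw')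
    have hold_q : ∀ k', k' ≠ j → ∀ w' ∈ walks k', ∀ x ∈ q'.support,
        x ∉ w'.2.2.support := by
      intro k' hk' w' hw' x hxq hxw'
      by_cases hxvj : x = v j
      · subst hxvj
        exact G3 j k' (fun h => hk' h.symm) w' hw' hxw'
      · exact hq'F x hxq hxvj (hsupF k' w' hw' x hxw')
    have hnew_p : ∀ k', k' ≠ i → ∀ w' ∈ walks' k', ∀ x ∈ p.support,
        x ∉ w'.2.2.support := by
      intro k' hk' w' hw'
      by_cases hkj : k' = j
      · rw [hkj, hwj] at hw'
        rcases List.mem_cons.mp hw' with rfl | hw'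
        · exact fun x hxp hxq' => hq'T x hxq' hxp
        · exact hold_p _ (hkj ▸ hk') w' (hkj ▸ hw')
      · rw [hwk k' hk' hkj] at hw'
        exact hold_p _ hk' w' hw'
    have hnew_q : ∀ k', k' ≠ j → ∀ w' ∈ walks' k', ∀ x ∈ q'.support,
        x ∉ w'.2.2.support := by
      intro k' hk' w' hw'
      by_cases hki : k' = i
      · rw [hki, hwi] at hw'
        rcases List.mem_cons.mp hw' with rfl | hw'
        · exact fun x hxq hxp => hq'T x hxq hxp
        · exact hold_q _ (hki ▸ hk') w' (hki ▸ hw')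
      · rw [hwk k' hki hk'] at hw'
        exact hold_q _ hk' w' hw'
    have memCases : ∀ k, ∀ w ∈ walks' k, (k = i ∧ w = wp) ∨ (k = j ∧ w = wq) ∨
        w ∈ walks k := by
      intro k w hw
      by_cases hki : k = i
      · rw [hki, hwi] at hw
        rcases List.mem_cons.mp hw with rfl | hw
        · exact Or.inl ⟨hki, rfl⟩
        · exact Or.inr (Or.inr (hki ▸ hw))
      by_cases hkj : k = j
      · rw [hkj, hwj] at hw
        rcases List.mem_cons.mp hw with rfl | hw
        · exact Or.inr (Or.inl ⟨hkj, rfl⟩)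
        · exact Or.inr (Or.inr (hkj ▸ hw))
      · rw [hwk k hki hkj] at hw
        exact Or.inr (Or.inr hw)
    refine ⟨walks', ?_, ?_, ?_, ?_, ?_⟩
    · -- starts
      intro k w hw
      rcases memCases k w hw with ⟨hk, rfl⟩ | ⟨hk, rfl⟩ | hw
      · rw [hk]
      · rw [hk]
      · exact G0 k w hw
    · -- lengths and avoiding S
      intro k w hw
      rcases memCases k w hw with ⟨hk, rfl⟩ | ⟨hk, rfl⟩ | hw
      · exact ⟨hplen, hpS⟩
      · refine ⟨?_, hq'S⟩
        show q'.length ≤ r + 1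
        omega
      · exact G1 k w hw
    · -- cross-branch disjointness
      intro k k' hkk' w hw w' hw'
      rcases memCases k w hw with ⟨hk, rfl⟩ | ⟨hk, rfl⟩ | hw
      · exact hnew_p k' (fun h => hkk' (hk.trans h.symm)) w' hw'
      · exact hnew_q k' (fun h => hkk' (hk.trans h.symm)) w' hw'
      · intro x hxw hxw'
        rcases memCases k' w' hw' with ⟨hk', rfl⟩ | ⟨hk', rfl⟩ | hw''
        · exact hnew_p k (fun h => hkk' (h.trans hk'.symm)) w (hsub _ w hw) x hxw' hxw
        · exact hnew_q k (fun h => hkk' (h.trans hk'.symm)) w (hsub _ w hw) x hxw' hxw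
        · exact G2 _ _ hkk' w hw w' hw'' x hxw hxw'
    · -- centers avoid other branches
      intro k k' hkk' w hw
      rcases memCases k' w hw with ⟨hk', rfl⟩ | ⟨hk', rfl⟩ | hw
      · intro hmem
        have hne : v k ≠ v i := fun h => hkk' ((hv h).trans hk'.symm)
        exact hPiF (v k) hmem hne (hvF k)
      · intro hmem
        have hne : v k ≠ v j := fun h => hkk' ((hv h).trans hk'.symm)
        exact hq'F (v k) hmem hne (hvF k)
      · exact G3 _ _ hkk' w hw
    · -- realized pairs
      intro pr hpr hprne
      rcases List.mem_cons.mp hpr with rfl | hpr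
      · refine ⟨wp, ?_, wq, ?_, z, hzT, c, q'.end_mem_support, hcz.symm⟩
        · rw [hwi]; exact List.mem_cons_self
        · rw [hwj]; exact List.mem_cons_self
      · obtain ⟨w, hw, w', hw', hrest⟩ := G4 pr hpr hprne
        exact ⟨w, hsub _ w hw, w', hsub _ w' hw', hrest⟩

end Clique



/-- From `m` heavy vertices over a common ultrafilter target set, `K_m` is a shallow minor. -/
lemma clique_of_heavies {U : Ultrafilter ℕ} (hU : ∀ a : ℕ, {a} ∉ U)
    (G : SimpleGraph V) (S : Set V) (r : ℕ)
    (e : ℕ → V) (he : Function.Injective e)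
    (H1 : ∀ v, v ∉ S → {n | near G S r v (e n)} ∉ U)
    (m : ℕ) (v : Fin m → V) (hv : Function.Injective v) (hvS : ∀ i, v i ∉ S)
    (H2 : ∀ i, {n | near G S (r + 1) (v i) (e n)} ∈ U) :
    ∃ α : Fin m → G.Subgraph,
      IsShallowMinorModel G (⊤ : SimpleGraph (Fin m)) (r + 1) α ∧
      ∀ i, (α i).verts.Finite := by
  classical
  obtain ⟨walks, G0, G1, G2, G3, G4⟩ := goodWalks_exists hU G S r e he H1 m v hv hvS H2
    ((List.finRange m).product (List.finRange m))
  refine ⟨fun i => tripleSubgraph G (v i) (walks i), ⟨?_, ?_, ?_⟩,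
    fun i => tripleSubgraph_verts_finite (v i) (walks i)⟩
  · -- connected with small radius
    intro i
    refine ⟨⟨v i, Or.inl rfl⟩, ?_⟩
    rintro ⟨x, hx⟩
    rcases hx with hx | hx
    · rw [Set.mem_singleton_iff] at hx
      subst hx
      exact ⟨Walk.nil.copy rfl (Subtype.ext rfl), by simp⟩
    · obtain ⟨w, hw, hxw⟩ := hx
      obtain ⟨q, hq⟩ := tripleSubgraph_walk hw (G0 i w hw) hxw
      refine ⟨q.copy rfl (Subtype.ext rfl), ?_⟩
      rw [Walk.length_copy]
      exact le_trans hq (G1 i w hw).1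
  · -- disjoint branch sets
    intro i j hij
    rw [Set.disjoint_left]
    rintro x (hx | hx) (hx' | hx')
    · rw [Set.mem_singleton_iff] at hx hx'
      exact hij (hv (hx ▸ hx'))
    · rw [Set.mem_singleton_iff] at hx
      obtain ⟨w, hw, hxw⟩ := hx'
      exact G3 i j hij w hw (hx ▸ hxw)
    · rw [Set.mem_singleton_iff] at hx'
      obtain ⟨w, hw, hxw⟩ := hx
      exact G3 j i (Ne.symm hij) w hw (hx' ▸ hxw)
    · obtain ⟨w, hw, hxw⟩ := hx
      obtain ⟨w', hw', hxw'⟩ := hx'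
      exact G2 i j hij w hw w' hw' x hxw hxw'
  · -- edges
    intro i j hij
    have hne : i ≠ j := hij.ne
    have hmem : (i, j) ∈ (List.finRange m).product (List.finRange m) :=
      List.pair_mem_product.mpr ⟨List.mem_finRange i, List.mem_finRange j⟩
    obtain ⟨w, hw, w', hw', x, hx, y, hy, hadj⟩ := G4 (i, j) hmem hne
    exact ⟨x, Or.inr ⟨w, hw, hx⟩, y, Or.inr ⟨w', hw', hy⟩, hadj⟩

lemma model_mono {W : Type} {H : SimpleGraph W} {d d' : ℕ} (hdd : d ≤ d')
    {α : W → G.Subgraph} (h : IsShallowMinorModel G H d α) :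
    IsShallowMinorModel G H d' α := by
  obtain ⟨h1, h2, h3⟩ := h
  refine ⟨fun w => ?_, h2, h3⟩
  obtain ⟨c, hc⟩ := h1 w
  refine ⟨c, fun x => ?_⟩
  obtain ⟨p, hp⟩ := hc x
  exact ⟨p, le_trans hp hdd⟩

/-- The deletion process: either a bounded deletion set with an infinite scattered subset of
`Wset` exists, or `K_{m+1}` is a shallow minor at depth `2d`. -/
lemma proc {U : Ultrafilter ℕ} (hU : ∀ a : ℕ, {a} ∉ U)
    (G : SimpleGraph V) (Wset : Set V) (hW : Wset.Infinite) (d m : ℕ) :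
    (∃ S X : Set V, S.Finite ∧ S.ncard ≤ 2 * d * m ∧ X ⊆ Wset ∧ X.Infinite ∧
      ScatteredIn G d S X) ∨
    (∃ α : Fin (m + 1) → G.Subgraph,
      IsShallowMinorModel G (⊤ : SimpleGraph (Fin (m + 1))) (2 * d) α ∧
      ∀ i, (α i).verts.Finite) := by
  classical
  set e : ℕ → V := fun n => (Set.Infinite.natEmbedding Wset hW n : V) with he_def
  have he : Function.Injective e := fun a b hab => by
    have := (Set.Infinite.natEmbedding Wset hW).injective (Subtype.ext hab)
    exact this
  have heW : ∀ n, e n ∈ Wset := fun n => (Set.Infinite.natEmbedding Wset hW n).2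
  -- the staged deletion process
  have stage : ∀ t : ℕ, t ≤ 2 * d →
      (∃ S : Set V, S.Finite ∧ S.ncard ≤ t * m ∧
        (∀ v, v ∉ S → {n | near G S t v (e n)} ∉ U)) ∨
      (∃ α : Fin (m + 1) → G.Subgraph,
        IsShallowMinorModel G (⊤ : SimpleGraph (Fin (m + 1))) (2 * d) α ∧
        ∀ i, (α i).verts.Finite) := by
    intro t
    induction t with
    | zero =>
      intro _
      refine Or.inl ⟨∅, Set.finite_empty, by simp, ?_⟩
      intro v hv hmem
      have hsub : {n | near G ∅ 0 v (e n)} ⊆ {n | e n = v} := by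
        intro n hn
        exact (near_zero hn).symm
      have : {n | e n = v} ∈ U := Filter.mem_of_superset hmem hsub
      refine finite_not_mem_U hU ?_ this
      have : {n | e n = v} = e ⁻¹' {v} := rfl
      rw [this]
      exact Set.Finite.preimage (Set.injOn_of_injective he) (Set.finite_singleton v)
    | succ t ih =>
      intro ht
      rcases ih (by omega) with ⟨S, hSfin, hScard, hSinv⟩ | hright
      · -- look at the heavy vertices at radius t+1
        set H : Set V := {v | v ∉ S ∧ {n | near G S (t + 1) v (e n)} ∈ U} with hH_def
        by_cases hbig : ∃ T : Set V, T ⊆ H ∧ T.Finite ∧ T.ncard = m + 1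
        · obtain ⟨T, hTH, hTfin, hTcard⟩ := hbig
          have hcard : hTfin.toFinset.card = m + 1 := by
            rw [← Set.ncard_eq_toFinset_card T hTfin, hTcard]
          set v : Fin (m + 1) → V :=
            fun i => (hTfin.toFinset.equivFin.symm (finCongr hcard.symm i) : V) with hv_def
          have hvH : ∀ i, v i ∈ H := by
            intro i
            have := (hTfin.toFinset.equivFin.symm (finCongr hcard.symm i)).2
            rw [Set.Finite.mem_toFinset] at this
            exact hTH this
          have hvinj : Function.Injective v := by
            intro a b hab
            have h1 := Subtype.ext hab
            have h2 := hTfin.toFinset.equivFin.symm.injective h1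
            simpa using (finCongr hcard.symm).injective h2
          obtain ⟨α, hα, hαfin⟩ := clique_of_heavies hU G S t e he hSinv (m + 1) v hvinj
            (fun i => (hvH i).1) (fun i => (hvH i).2)
          exact Or.inr ⟨α, model_mono (by omega) hα, hαfin⟩
        · -- only few heavy vertices: delete them
          have hHfin : H.Finite := by
            by_contra hinf
            obtain ⟨T, hT1, hT2, hT3⟩ :=
              Set.Infinite.exists_subset_ncard_eq hinf (m + 1)
            exact hbig ⟨T, hT1, hT2, hT3⟩
          have hHcard : H.ncard ≤ m := by
            by_contra hgt
            push_neg at hgt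
            obtain ⟨T, hT1, hT2⟩ := Set.exists_subset_card_eq (by omega : m + 1 ≤ H.ncard)
            exact hbig ⟨T, hT1, hHfin.subset hT1, hT2⟩
          refine Or.inl ⟨S ∪ H, hSfin.union hHfin, ?_, ?_⟩
          · calc (S ∪ H).ncard ≤ S.ncard + H.ncard := Set.ncard_union_le S H
            _ ≤ t * m + m := add_le_add hScard hHcard
            _ = (t + 1) * m := by ring
          · intro w hw hmem
            have hw' : w ∉ S := fun h => hw (Or.inl h)
            have hsub : {n | near G (S ∪ H) (t + 1) w (e n)} ⊆
                {n | near G S (t + 1) w (e n)} := by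
              intro n hn
              exact near_mono_S Set.subset_union_left hn
            have : {n | near G S (t + 1) w (e n)} ∈ U := Filter.mem_of_superset hmem hsub
            exact hw (Or.inr ⟨hw', this⟩)
      · exact Or.inr hright
  rcases stage (2 * d) (le_refl _) with ⟨S, hSfin, hScard, hSinv⟩ | hright
  · -- extract an infinite scattered set greedily
    left
    have key : ∀ l : List V, ∃ n : ℕ, e n ∉ S ∧
        ∀ x ∈ l, x ∉ S → ¬ near G S (2 * d) x (e n) := by
      intro l
      have hB : {n | e n ∈ S} ∉ U := by
        refine finite_not_mem_U hU ?_
        have : {n | e n ∈ S} = e ⁻¹' S := rfl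
        rw [this]
        exact Set.Finite.preimage (Set.injOn_of_injective he) hSfin
      have hA : {n | e n ∈ S}ᶜ ∈ U := Ultrafilter.compl_mem_iff_notMem.mpr hB
      have hsfin : ({x | x ∈ l ∧ x ∉ S} : Set V).Finite :=
        Set.Finite.subset l.finite_toSet (fun x hx => hx.1)
      obtain ⟨n, hn1, hn2⟩ := good_index_exists hA hsfin
        (fun x => {n | near G S (2 * d) x (e n)})
        (fun x hx => hSinv x hx.2)
      exact ⟨n, hn1, fun x hxl hxS => hn2 x ⟨hxl, hxS⟩⟩
    set next : List V → V := fun l => e (Classical.choose (key l)) with hnext_def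
    have hnext1 : ∀ l, next l ∉ S := fun l => (Classical.choose_spec (key l)).1
    have hnextW : ∀ l, next l ∈ Wset := fun l => heW _
    have hnext2 : ∀ l, ∀ x ∈ l, x ∉ S → ¬ near G S (2 * d) x (next l) :=
      fun l => (Classical.choose_spec (key l)).2
    set L : ℕ → List V := fun k => Nat.rec [] (fun _ ih => ih ++ [next ih]) k with hL_def
    have hLsucc : ∀ k, L (k + 1) = L k ++ [next (L k)] := fun k => rfl
    set xs : ℕ → V := fun k => next (L k) with hxs_def
    have hmemL : ∀ k, ∀ x ∈ L k, x ∉ S := by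
      intro k
      induction k with
      | zero => intro x hx; simp [hL_def] at hx
      | succ k ih =>
        intro x hx
        rw [hLsucc, List.mem_append] at hx
        rcases hx with hx | hx
        · exact ih x hx
        · simp only [List.mem_singleton] at hx
          subst hx
          exact hnext1 _
      
    have hLmono : ∀ j k, j ≤ k → ∀ x ∈ L j, x ∈ L k := by
      intro j k hjk
      induction k with
      | zero =>
        intro x hx
        have : j = 0 := by omega
        subst this
        exact hx
      | succ k ih =>
        intro x hx
        rcases Nat.lt_or_ge j (k + 1) with h | h
        · rw [hLsucc, List.mem_append]
          exact Or.inl (ih (by omega) x hx)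
        · have : j = k + 1 := by omega
          subst this
          exact hx
    have hxmem : ∀ k, xs k ∈ L (k + 1) := by
      intro k
      rw [hLsucc, List.mem_append]
      exact Or.inr (List.mem_singleton.mpr rfl)
    have hfar : ∀ j k, j < k → ¬ near G S (2 * d) (xs j) (xs k) := by
      intro j k hjk
      exact hnext2 (L k) (xs j) (hLmono (j + 1) k hjk (xs j) (hxmem j)) (hnext1 _)
    have hxinj : Function.Injective xs := by
      intro a b hab
      by_contra hne
      rcases Nat.lt_or_ge a b with h | h
      · exact hfar a b h (hab ▸ ⟨Walk.nil, by simp, by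
          intro x hx
          simp only [Walk.support_nil, List.mem_singleton] at hx
          subst hx
          exact hnext1 _⟩)
      · have h' : b < a := by omega
        exact hfar b a h' (hab ▸ ⟨Walk.nil, by simp, by
          intro x hx
          simp only [Walk.support_nil, List.mem_singleton] at hx
          subst hx
          exact hnext1 _⟩)
    refine ⟨S, Set.range xs, hSfin, by omega, ?_, Set.infinite_range_of_injective hxinj, ?_, ?_⟩
    · rintro x ⟨k, rfl⟩
      exact hnextW _
    · rw [Set.disjoint_left]
      rintro x ⟨k, rfl⟩
      exact hnext1 _
    · rintro u ⟨a, rfl⟩ w ⟨b, rfl⟩ huw p hp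
      by_contra hlen
      push_neg at hlen
      have hane : a ≠ b := fun h => huw (h ▸ rfl)
      rcases Nat.lt_or_ge a b with h | h
      · exact hfar a b h ⟨p, hlen, hp⟩
      · have h' : b < a := by omega
        refine hfar b a h' ⟨p.reverse, by simpa using hlen, ?_⟩
        intro x hx
        rw [Walk.support_reverse, List.mem_reverse] at hx
        exact hp x hx
  · exact Or.inr hright

/-- Push a shallow minor model forward along an injective graph homomorphism. -/
lemma model_push {V' : Type} {G' : SimpleGraph V'} {W : Type} {H : SimpleGraph W} {d : ℕ}
    (f : V → V') (hinj : Function.Injective f)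
    (hhom : ∀ ⦃a b : V⦄, G.Adj a b → G'.Adj (f a) (f b))
    (α : W → G.Subgraph) (h : IsShallowMinorModel G H d α) (hfin : ∀ w, (α w).verts.Finite) :
    ∃ α' : W → G'.Subgraph, IsShallowMinorModel G' H d α' ∧ ∀ w, (α' w).verts.Finite := by
  classical
  obtain ⟨h1, h2, h3⟩ := h
  set F : G →g G' := ⟨f, fun hab => hhom hab⟩ with hF_def
  refine ⟨fun w => (α w).map F, ⟨?_, ?_, ?_⟩, ?_⟩
  · intro w
    obtain ⟨c, hc⟩ := h1 w
    have hcmem : f c.1 ∈ ((α w).map F).verts := ⟨c.1, c.2, rfl⟩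
    refine ⟨⟨f c.1, hcmem⟩, ?_⟩
    rintro ⟨y', hy'⟩
    obtain ⟨y, hy, rfl⟩ := hy'
    obtain ⟨p, hp⟩ := hc ⟨y, hy⟩
    set φ : (α w).coe →g ((α w).map F).coe :=
      ⟨fun x => ⟨f x.1, ⟨x.1, x.2, rfl⟩⟩, by
        rintro ⟨a, ha⟩ ⟨b, hb⟩ hab
        exact ⟨a, b, hab, rfl, rfl⟩⟩ with hφ_def
    refine ⟨((p.map φ).copy (Subtype.ext rfl) (Subtype.ext rfl)), ?_⟩
    rw [Walk.length_copy, Walk.length_map]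
    exact hp
  · intro w w' hww'
    rw [Set.disjoint_left]
    rintro x ⟨a, ha, rfl⟩ ⟨b, hb, hab⟩
    have : a = b := hinj hab.symm
    subst this
    exact Set.disjoint_left.mp (h2 w w' hww') ha hb
  · intro w w' hadj
    obtain ⟨x, hx, y, hy, hxy⟩ := h3 w w' hadj
    exact ⟨f x, ⟨x, hx, rfl⟩, f y, ⟨y, hy, rfl⟩, hhom hxy⟩
  · intro w
    have : ((α w).map F).verts = f '' (α w).verts := rfl
    rw [this]
    exact (hfin w).image f

section Ultra

variable {U : Ultrafilter ℕ} {Vs : ℕ → Type} {Gs : ∀ n, SimpleGraph (Vs n)}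

lemma UGraph_adj_mk {g h : ∀ n, Vs n} :
    (UGraph U Gs).Adj (Quotient.mk (prodSetoid U Vs) g) (Quotient.mk (prodSetoid U Vs) h) ↔
      ∀ᶠ n in (U : Filter ℕ), (Gs n).Adj (g n) (h n) := Iff.rfl

lemma UVertex_eq_mk {g h : ∀ n, Vs n} :
    (Quotient.mk (prodSetoid U Vs) g : UVertex U Vs) = Quotient.mk (prodSetoid U Vs) h ↔
      ∀ᶠ n in (U : Filter ℕ), g n = h n :=
  ⟨Quotient.exact, fun hgh => Quotient.sound (by exact hgh)⟩

lemma UGraph_adj_out {x y : UVertex U Vs} (h : (UGraph U Gs).Adj x y) :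
    ∀ᶠ n in (U : Filter ℕ), (Gs n).Adj (x.out n) (y.out n) := by
  have hx : Quotient.mk (prodSetoid U Vs) x.out = x := Quotient.out_eq x
  have hy : Quotient.mk (prodSetoid U Vs) y.out = y := Quotient.out_eq y
  rw [← hx, ← hy] at h
  exact h

lemma UVertex_ne_out {x y : UVertex U Vs} (h : x ≠ y) :
    ∀ᶠ n in (U : Filter ℕ), x.out n ≠ y.out n := by
  have : {n | x.out n = y.out n} ∉ U := by
    intro hmem
    apply h
    rw [← Quotient.out_eq x, ← Quotient.out_eq y]
    exact Quotient.sound (by exact hmem)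
  have := Ultrafilter.compl_mem_iff_notMem.mpr this
  exact this

end Ultra

section Transfer

variable {U : Ultrafilter ℕ} {Vs : ℕ → Type} {Gs : ∀ n, SimpleGraph (Vs n)}

/-- Łoś-type transfer: a finite-branch-set clique model in the ultraproduct yields a clique
model in one of the component graphs. -/
lemma transfer_clique {m D : ℕ}
    (α : Fin m → (UGraph U Gs).Subgraph)
    (hmodel : IsShallowMinorModel (UGraph U Gs) (⊤ : SimpleGraph (Fin m)) D α)
    (hfin : ∀ i, (α i).verts.Finite) :
    ∃ n, IsShallowMinor (Gs n) (⊤ : SimpleGraph (Fin m)) D := by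
  classical
  obtain ⟨h1, h2, h3⟩ := hmodel
  choose cs hcs using h1
  choose ws hws using hcs
  have hedge : ∀ i j : Fin m, i ≠ j →
      ∃ (a : ((α i).verts)) (b : ((α j).verts)), (UGraph U Gs).Adj a.1 b.1 := by
    intro i j hij
    obtain ⟨x, hx, y, hy, hxy⟩ := h3 i j ((SimpleGraph.top_adj i j).mpr hij)
    exact ⟨⟨x, hx⟩, ⟨y, hy⟩, hxy⟩
  choose aw bw hawbw using hedge
  set ρ : UVertex U Vs → ∀ k, Vs k := fun x => Quotient.out x with hρ_def
  set X : ∀ (i : Fin m), ((α i).verts) → ℕ → UVertex U Vs :=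
    fun i a k => ((ws i a).getVert k).1 with hX_def
  have hX0 : ∀ i a, X i a 0 = (cs i).1 := by
    intro i a
    simp only [hX_def, Walk.getVert_zero]
  have hXD : ∀ i a, X i a D = a.1 := by
    intro i a
    simp only [hX_def]
    rw [Walk.getVert_of_length_le _ (hws i a)]
  have hXmem : ∀ i a k, X i a k ∈ (α i).verts := fun i a k => ((ws i a).getVert k).2
  have hstep : ∀ i a (k : ℕ), X i a k = X i a (k + 1) ∨
      (UGraph U Gs).Adj (X i a k) (X i a (k + 1)) := by
    intro i a k
    by_cases hk : k < (ws i a).length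
    · right
      have hadj := (ws i a).adj_getVert_succ hk
      rw [Subgraph.coe_adj] at hadj
      simp only [hX_def]
      exact (α i).adj_sub hadj
    · left
      push_neg at hk
      simp only [hX_def]
      rw [Walk.getVert_of_length_le _ hk, Walk.getVert_of_length_le _ (by omega)]
  have EV1 : ∀ i a (k : ℕ), ∀ᶠ n in (U : Filter ℕ),
      ρ (X i a k) n = ρ (X i a (k + 1)) n ∨
        (Gs n).Adj (ρ (X i a k) n) (ρ (X i a (k + 1)) n) := by
    intro i a k
    rcases hstep i a k with h | h
    · exact Filter.Eventually.of_forall (fun n => Or.inl (by rw [h]))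
    · exact (UGraph_adj_out h).mono (fun n hn => Or.inr hn)
  have EV2 : ∀ (i j : Fin m), i ≠ j → ∀ (a : ((α i).verts)) (b : ((α j).verts)),
      ∀ᶠ n in (U : Filter ℕ), ρ a.1 n ≠ ρ b.1 n := by
    intro i j hij a b
    have hne : a.1 ≠ b.1 := by
      intro heq
      exact Set.disjoint_left.mp (h2 i j hij) a.2 (heq ▸ b.2)
    exact UVertex_ne_out hne
  have EV3 : ∀ (i j : Fin m) (h : i ≠ j), ∀ᶠ n in (U : Filter ℕ),
      (Gs n).Adj (ρ (aw i j h).1 n) (ρ (bw i j h).1 n) :=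
    fun i j h => UGraph_adj_out (hawbw i j h)
  have BIG : ∀ᶠ n in (U : Filter ℕ),
      (∀ (i : Fin m) (a : ((α i).verts)) (k : Fin D),
        ρ (X i a k.1) n = ρ (X i a (k.1 + 1)) n ∨
          (Gs n).Adj (ρ (X i a k.1) n) (ρ (X i a (k.1 + 1)) n)) ∧
      (∀ (i j : Fin m), i ≠ j → ∀ (a : ((α i).verts)) (b : ((α j).verts)),
        ρ a.1 n ≠ ρ b.1 n) ∧
      (∀ (i j : Fin m) (h : i ≠ j),
        (Gs n).Adj (ρ (aw i j h).1 n) (ρ (bw i j h).1 n)) := by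
    refine Filter.Eventually.and ?_ (Filter.Eventually.and ?_ ?_)
    · refine Filter.eventually_all.mpr (fun i => ?_)
      haveI := (hfin i).to_subtype
      refine Filter.eventually_all.mpr (fun a => ?_)
      exact Filter.eventually_all.mpr (fun k => EV1 i a k.1)
    · refine Filter.eventually_all.mpr (fun i => ?_)
      refine Filter.eventually_all.mpr (fun j => ?_)
      by_cases hij : i = j
      · exact Filter.Eventually.of_forall (fun n h => absurd hij h)
      · haveI := (hfin i).to_subtype
        haveI := (hfin j).to_subtype
        refine (Filter.eventually_all.mpr (fun a => Filter.eventually_all.mpr (fun b =>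
          EV2 i j hij a b))).mono ?_
        intro n hn _
        exact hn
    · refine Filter.eventually_all.mpr (fun i => ?_)
      refine Filter.eventually_all.mpr (fun j => ?_)
      by_cases hij : i = j
      · exact Filter.Eventually.of_forall (fun n h => absurd hij h)
      · exact (EV3 i j hij).mono (fun n hn h => hn)
  obtain ⟨n, hn1, hn2, hn3⟩ := BIG.exists
  set cn : Fin m → Vs n := fun i => ρ (cs i).1 n with hcn_def
  have hlw : ∀ (i : Fin m) (a : ((α i).verts)),
      ∃ p : (Gs n).Walk (cn i) (ρ a.1 n), p.length ≤ D ∧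
        ∀ x ∈ p.support, ∃ b : ((α i).verts), ρ b.1 n = x := by
    intro i a
    set f : ℕ → Vs n := fun t => ρ (X i a (min t D)) n with hf_def
    have hcond : ∀ t < D, f t = f (t + 1) ∨ (Gs n).Adj (f t) (f (t + 1)) := by
      intro t ht
      have h1t : min t D = t := by omega
      have h2t : min (t + 1) D = t + 1 := by omega
      simp only [hf_def, h1t, h2t]
      exact hn1 i a ⟨t, ht⟩
    obtain ⟨p, hplen, hpsup⟩ := lazy_walk f D hcond
    have hf0 : f 0 = cn i := by
      simp only [hf_def, Nat.zero_min]
      rw [hX0]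
    have hfD : f D = ρ a.1 n := by
      simp only [hf_def, Nat.min_self]
      rw [hXD]
    refine ⟨p.copy hf0 hfD, ?_, ?_⟩
    · rw [Walk.length_copy]
      exact hplen
    · intro x hx
      rw [Walk.support_copy] at hx
      obtain ⟨t, htD, hft⟩ := hpsup x hx
      refine ⟨⟨X i a (min t D), hXmem i a _⟩, ?_⟩
      rw [← hft]
  choose pw hpw1 hpw2 using hlw
  have hconv : ∀ (i : Fin m) (a : ((hfin i).toFinset : Finset (UVertex U Vs))),
      a.1 ∈ (α i).verts :=
    fun i a => (Set.Finite.mem_toFinset (hfin i)).mp a.2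
  set Li : ∀ _ : Fin m, List (BWalk (Gs n)) := fun i =>
    ((hfin i).toFinset.attach.toList).map
      (fun a => ⟨cn i, ρ a.1 n, pw i ⟨a.1, hconv i a⟩⟩) with hLi_def
  have hLimem : ∀ (i : Fin m) (a : ((α i).verts)),
      (⟨cn i, ρ a.1 n, pw i a⟩ : BWalk (Gs n)) ∈ Li i := by
    intro i a
    simp only [hLi_def, List.mem_map]
    refine ⟨⟨a.1, (Set.Finite.mem_toFinset (hfin i)).mpr a.2⟩, ?_, rfl⟩
    rw [Finset.mem_toList]
    exact Finset.mem_attach _ _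
  have hstart : ∀ (i : Fin m), ∀ w ∈ Li i, w.1 = cn i := by
    intro i w hw
    simp only [hLi_def, List.mem_map] at hw
    obtain ⟨a, _, rfl⟩ := hw
    rfl
  have hchar : ∀ (i : Fin m), ∀ x ∈ (tripleSubgraph (Gs n) (cn i) (Li i)).verts,
      ∃ b : ((α i).verts), ρ b.1 n = x := by
    intro i x hx
    rcases hx with hx | hx
    · rw [Set.mem_singleton_iff] at hx
      exact ⟨cs i, hx.symm⟩
    · obtain ⟨w, hw, hxw⟩ := hx
      have hw' := hw
      simp only [hLi_def, List.mem_map] at hw'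
      obtain ⟨a, _, hweq⟩ := hw'
      subst hweq
      exact hpw2 i ⟨a.1, hconv i a⟩ x hxw
  refine ⟨n, fun i => tripleSubgraph (Gs n) (cn i) (Li i), ?_, ?_, ?_⟩
  · intro i
    refine ⟨⟨cn i, Or.inl rfl⟩, ?_⟩
    rintro ⟨x, hx⟩
    rcases hx with hx | hx
    · rw [Set.mem_singleton_iff] at hx
      subst hx
      exact ⟨Walk.nil.copy rfl (Subtype.ext rfl), by simp⟩
    · obtain ⟨w, hw, hxw⟩ := hx
      obtain ⟨q, hq⟩ := tripleSubgraph_walk hw (hstart i w hw) hxw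
      refine ⟨q.copy rfl (Subtype.ext rfl), ?_⟩
      rw [Walk.length_copy]
      refine le_trans hq ?_
      have hw' := hw
      simp only [hLi_def, List.mem_map] at hw'
      obtain ⟨a, _, hweq⟩ := hw'
      rw [← hweq]
      exact hpw1 i ⟨a.1, hconv i a⟩
  · intro i j hij
    rw [Set.disjoint_left]
    intro x hxi hxj
    obtain ⟨b, hb⟩ := hchar i x hxi
    obtain ⟨b', hb'⟩ := hchar j x hxj
    exact hn2 i j hij b b' (hb.trans hb'.symm)
  · intro i j hadj
    have hij : i ≠ j := hadj.ne
    refine ⟨ρ (aw i j hij).1 n,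
      Or.inr ⟨⟨cn i, ρ (aw i j hij).1 n, pw i (aw i j hij)⟩, hLimem i (aw i j hij),
        (pw i (aw i j hij)).end_mem_support⟩,
      ρ (bw i j hij).1 n,
      Or.inr ⟨⟨cn j, ρ (bw i j hij).1 n, pw j (bw i j hij)⟩, hLimem j (bw i j hij),
        (pw j (bw i j hij)).end_mem_support⟩,
      hn3 i j hij⟩

end Transfer

section Komega

variable {U : Ultrafilter ℕ} {Vs : ℕ → Type} {Gs : ∀ n, SimpleGraph (Vs n)}

lemma cofinite_mem_U (hU : ∀ a : ℕ, {a} ∉ U) (i : ℕ) : {n : ℕ | i ≤ n} ∈ U := by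
  have hfin : ({n : ℕ | n < i}).Finite := Set.finite_Iio i
  have h2 := Ultrafilter.compl_mem_iff_notMem.mpr (finite_not_mem_U hU hfin)
  have : {n : ℕ | i ≤ n} = {n : ℕ | n < i}ᶜ := by
    ext n; simp only [Set.mem_setOf_eq, Set.mem_compl_iff, not_lt]
  rw [this]
  exact h2

lemma out_mk_eventually (g : ∀ n, Vs n) :
    ∀ᶠ n in (U : Filter ℕ), (Quotient.mk (prodSetoid U Vs) g).out n = g n := by
  have h : Quotient.mk (prodSetoid U Vs) ((Quotient.mk (prodSetoid U Vs) g).out) =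
      Quotient.mk (prodSetoid U Vs) g := Quotient.out_eq _
  have h2 := Quotient.exact h
  exact h2

lemma UGraph_adj_out_iff {x y : UVertex U Vs} :
    (UGraph U Gs).Adj x y ↔ ∀ᶠ n in (U : Filter ℕ), (Gs n).Adj (x.out n) (y.out n) := by
  constructor
  · exact UGraph_adj_out
  · intro h
    rw [← Quotient.out_eq x, ← Quotient.out_eq y]
    exact h

/-- An internal subgraph of the ultraproduct, defined from componentwise data. -/
def branchSubgraph (U : Ultrafilter ℕ) (Gs : ∀ n, SimpleGraph (Vs n))
    (BV : ∀ n, Set (Vs n)) (BA : ∀ n, Vs n → Vs n → Prop)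
    (hsub : ∀ n x y, BA n x y → (Gs n).Adj x y)
    (hev : ∀ n x y, BA n x y → x ∈ BV n)
    (hsym : ∀ n x y, BA n x y → BA n y x) : (UGraph U Gs).Subgraph where
  verts := {x | ∀ᶠ n in (U : Filter ℕ), x.out n ∈ BV n}
  Adj x y := ∀ᶠ n in (U : Filter ℕ), BA n (x.out n) (y.out n)
  adj_sub := by
    intro x y h
    exact UGraph_adj_out_iff.mpr (h.mono (fun n hn => hsub n _ _ hn))
  edge_vert := by
    intro x y h
    exact h.mono (fun n hn => hev n _ _ hn)
  symm := by
    constructor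
    intro x y h
    exact h.mono (fun n hn => hsym n _ _ hn)

/-- If every component graph contains a clique minor of growing size, the ultraproduct
contains an infinite clique minor. -/
lemma komega_in_ultraproduct (hU : ∀ a : ℕ, {a} ∉ U) {D : ℕ}
    (hcl : ∀ n, IsShallowMinor (Gs n) (⊤ : SimpleGraph (Fin (n + 1))) D) :
    IsShallowMinor (UGraph U Gs) Komega D := by
  classical
  choose βm hβm using hcl
  have hrad : ∀ n (i : Fin (n + 1)), ∃ c : (βm n i).verts, ∀ x : (βm n i).verts,
      ∃ p : (βm n i).coe.Walk c x, p.length ≤ D := fun n => (hβm n).1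
  choose csm hcsm using hrad
  choose wsm hwsm using hcsm
  have hdisj : ∀ n (i j : Fin (n + 1)), i ≠ j → Disjoint (βm n i).verts (βm n j).verts :=
    fun n => (hβm n).2.1
  have hedges : ∀ n (i j : Fin (n + 1)), i ≠ j →
      ∃ x ∈ (βm n i).verts, ∃ y ∈ (βm n j).verts, (Gs n).Adj x y := by
    intro n i j hij
    exact (hβm n).2.2 i j ((SimpleGraph.top_adj i j).mpr hij)
  set junk : ∀ n, Vs n := fun n => (csm n 0).1 with hjunk_def
  set fi : ∀ (i n : ℕ), i ≤ n → Fin (n + 1) := fun i n h => ⟨i, by omega⟩ with hfi_def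
  set BV : ℕ → ∀ n, Set (Vs n) :=
    fun i n => if h : i ≤ n then (βm n (fi i n h)).verts else ∅ with hBV_def
  set BA : ℕ → ∀ n, Vs n → Vs n → Prop :=
    fun i n x y => if h : i ≤ n then (βm n (fi i n h)).Adj x y else False with hBA_def
  have hBAsub : ∀ i n x y, BA i n x y → (Gs n).Adj x y := by
    intro i n x y h
    simp only [hBA_def] at h
    split_ifs at h with hle
    exact (βm n (fi i n hle)).adj_sub h
  have hBAev : ∀ i n x y, BA i n x y → x ∈ BV i n := by
    intro i n x y h
    simp only [hBA_def] at h
    simp only [hBV_def]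
    split_ifs at h ⊢ with hle
    exact (βm n (fi i n hle)).edge_vert h
  have hBAsym : ∀ i n x y, BA i n x y → BA i n y x := by
    intro i n x y h
    simp only [hBA_def] at h ⊢
    split_ifs at h ⊢ with hle
    exact h.symm
  set αS : ℕ → (UGraph U Gs).Subgraph :=
    fun i => branchSubgraph U Gs (BV i) (BA i) (hBAsub i) (hBAev i) (hBAsym i) with hαS_def
  have hαS_verts : ∀ i x, x ∈ (αS i).verts ↔ ∀ᶠ n in (U : Filter ℕ), x.out n ∈ BV i n := by
    intro i x
    rfl
  have hαS_adj : ∀ i x y, (αS i).Adj x y ↔ ∀ᶠ n in (U : Filter ℕ),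
      BA i n (x.out n) (y.out n) := by
    intro i x y
    rfl
  refine ⟨αS, ?_, ?_, ?_⟩
  · -- radius
    intro i
    set CS : ∀ n, Vs n := fun n => if h : i ≤ n then (csm n (fi i n h)).1 else junk n
      with hCS_def
    set cstar : UVertex U Vs := Quotient.mk (prodSetoid U Vs) CS with hcstar_def
    have hcmem : cstar ∈ (αS i).verts := by
      rw [hαS_verts]
      filter_upwards [out_mk_eventually (U := U) CS, cofinite_mem_U hU i] with n h1 h2
      rw [h1]
      have h2' : i ≤ n := h2
      simp only [hCS_def, hBV_def]
      rw [dif_pos h2', dif_pos h2']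
      exact (csm n (fi i n h2')).2
    refine ⟨⟨cstar, hcmem⟩, ?_⟩
    rintro ⟨xv, hxv⟩
    rw [hαS_verts] at hxv
    have hA : {n | xv.out n ∈ BV i n} ∩ {n | i ≤ n} ∈ U :=
      Filter.inter_mem hxv (cofinite_mem_U hU i)
    have hconv : ∀ n (hn : n ∈ ({n | xv.out n ∈ BV i n} ∩ {n | i ≤ n})),
        xv.out n ∈ (βm n (fi i n hn.2)).verts := by
      intro n hn
      have h1 := hn.1
      have h2 : i ≤ n := hn.2
      simp only [Set.mem_setOf_eq, hBV_def] at h1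
      rw [dif_pos h2] at h1
      exact h1
    set u : ℕ → ∀ n, Vs n := fun k n =>
      if hn : n ∈ ({n | xv.out n ∈ BV i n} ∩ {n | i ≤ n}) then
        ((wsm n (fi i n hn.2) ⟨xv.out n, hconv n hn⟩).getVert k).1
      else xv.out n with hu_def
    have c1 : ∀ k, ∀ᶠ n in (U : Filter ℕ), u k n ∈ BV i n := by
      intro k
      filter_upwards [hA] with n hn
      have h2 : i ≤ n := hn.2
      simp only [hu_def, dif_pos hn, hBV_def]
      simp only [dif_pos h2]
      convert ((wsm n (fi i n hn.2) ⟨xv.out n, hconv n hn⟩).getVert k).2 using 2 <;> exact dif_pos hn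
    have c2 : ∀ᶠ n in (U : Filter ℕ), u 0 n = CS n := by
      filter_upwards [hA] with n hn
      have h2 : i ≤ n := hn.2
      simp only [hu_def, dif_pos hn, Walk.getVert_zero, hCS_def]
      rw [dif_pos h2]
    have c3 : ∀ᶠ n in (U : Filter ℕ), u D n = xv.out n := by
      filter_upwards [hA] with n hn
      simp only [hu_def, dif_pos hn]
      rw [Walk.getVert_of_length_le _ (hwsm n (fi i n hn.2) ⟨xv.out n, hconv n hn⟩)]
    have c4 : ∀ k, {n | u k n = u (k + 1) n} ∈ U ∨
        {n | BA i n (u k n) (u (k + 1) n)} ∈ U := by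
      intro k
      have hsubs : ({n | xv.out n ∈ BV i n} ∩ {n | i ≤ n}) ⊆
          {n | u k n = u (k + 1) n} ∪ {n | BA i n (u k n) (u (k + 1) n)} := by
        intro n hn
        by_cases hk : k < (wsm n (fi i n hn.2) ⟨xv.out n, hconv n hn⟩).length
        · right
          have hadj := (wsm n (fi i n hn.2) ⟨xv.out n, hconv n hn⟩).adj_getVert_succ hk
          rw [Subgraph.coe_adj] at hadj
          have h2 : i ≤ n := hn.2
          simp only [Set.mem_setOf_eq, hu_def, dif_pos hn, hBA_def]
          rw [dif_pos h2]
          exact hadj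
        · left
          push_neg at hk
          simp only [Set.mem_setOf_eq, hu_def, dif_pos hn]
          rw [Walk.getVert_of_length_le _ hk, Walk.getVert_of_length_le _ (by omega)]
      rcases Ultrafilter.union_mem_iff.mp (Filter.mem_of_superset hA hsubs) with h | h
      · exact Or.inl h
      · exact Or.inr h
    set Uk : ℕ → UVertex U Vs := fun k => Quotient.mk (prodSetoid U Vs) (u k) with hUk_def
    have muk : ∀ k, Uk k ∈ (αS i).verts := by
      intro k
      rw [hαS_verts]
      filter_upwards [out_mk_eventually (U := U) (u k), c1 k] with n h1 h2
      rw [h1]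
      exact h2
    have hstep : ∀ k, (⟨Uk k, muk k⟩ : (αS i).verts) = ⟨Uk (k + 1), muk (k + 1)⟩ ∨
        (αS i).coe.Adj ⟨Uk k, muk k⟩ ⟨Uk (k + 1), muk (k + 1)⟩ := by
      intro k
      rcases c4 k with h | h
      · left
        refine Subtype.ext ?_
        exact Quotient.sound (by exact h)
      · right
        rw [Subgraph.coe_adj, hαS_adj]
        filter_upwards [out_mk_eventually (U := U) (u k),
          out_mk_eventually (U := U) (u (k + 1)), h] with n h1 h2 h3
        rw [h1, h2]
        exact h3
    set f : ℕ → (αS i).verts := fun k => ⟨Uk (min k D), muk (min k D)⟩ with hf_def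
    have hcond : ∀ t < D, f t = f (t + 1) ∨ (αS i).coe.Adj (f t) (f (t + 1)) := by
      intro t ht
      have h1t : min t D = t := by omega
      have h2t : min (t + 1) D = t + 1 := by omega
      simp only [hf_def, h1t, h2t]
      exact hstep t
    obtain ⟨p, hplen, _⟩ := lazy_walk f D hcond
    have hend0 : f 0 = (⟨cstar, hcmem⟩ : (αS i).verts) := by
      refine Subtype.ext ?_
      simp only [hf_def, Nat.zero_min]
      exact Quotient.sound (by exact c2)
    have hendD : f D = (⟨xv, by rw [hαS_verts]; exact hxv⟩ : (αS i).verts) := by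
      refine Subtype.ext ?_
      simp only [hf_def, Nat.min_self]
      exact (Quotient.sound (by exact c3) : Uk D = Quotient.mk (prodSetoid U Vs) (xv.out)).trans
        (Quotient.out_eq xv)
    exact ⟨(p.copy hend0 hendD), by rw [Walk.length_copy]; exact hplen⟩
  · -- disjointness
    intro i j hij
    rw [Set.disjoint_left]
    intro x hxi hxj
    rw [hαS_verts] at hxi hxj
    have hA : ({n | x.out n ∈ BV i n} ∩ {n | x.out n ∈ BV j n}) ∩
        ({n | i ≤ n} ∩ {n | j ≤ n}) ∈ U :=
      Filter.inter_mem (Filter.inter_mem hxi hxj)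
        (Filter.inter_mem (cofinite_mem_U hU i) (cofinite_mem_U hU j))
    obtain ⟨n, ⟨h1, h2⟩, h3, h4⟩ := Filter.nonempty_of_mem hA
    have h3' : i ≤ n := h3
    have h4' : j ≤ n := h4
    simp only [Set.mem_setOf_eq, hBV_def] at h1 h2
    rw [dif_pos h3'] at h1
    rw [dif_pos h4'] at h2
    have hne : fi i n h3 ≠ fi j n h4 := by
      intro heq
      apply hij
      simpa [hfi_def, Fin.mk.injEq] using heq
    exact Set.disjoint_left.mp (hdisj n _ _ hne) h1 h2
  · -- edges
    intro i j hadjK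
    have hij : i ≠ j := hadjK.ne
    have hxy : ∀ n, ∃ xy : Vs n × Vs n, ∀ h3 : i ≤ n, ∀ h4 : j ≤ n,
        xy.1 ∈ (βm n (fi i n h3)).verts ∧ xy.2 ∈ (βm n (fi j n h4)).verts ∧
        (Gs n).Adj xy.1 xy.2 := by
      intro n
      by_cases h : i ≤ n ∧ j ≤ n
      · have hne : fi i n h.1 ≠ fi j n h.2 := by
          intro heq
          apply hij
          simpa [hfi_def, Fin.mk.injEq] using heq
        obtain ⟨x, hx, y, hy, hxy⟩ := hedges n _ _ hne
        exact ⟨(x, y), fun h3 h4 => ⟨hx, hy, hxy⟩⟩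
      · refine ⟨(junk n, junk n), fun h3 h4 => absurd ⟨h3, h4⟩ h⟩
    choose xy hxy using hxy
    set gx : ∀ n, Vs n := fun n => (xy n).1 with hgx_def
    set gy : ∀ n, Vs n := fun n => (xy n).2 with hgy_def
    refine ⟨Quotient.mk (prodSetoid U Vs) gx, ?_, Quotient.mk (prodSetoid U Vs) gy, ?_, ?_⟩
    · refine (hαS_verts i _).mpr ?_
      filter_upwards [out_mk_eventually (U := U) gx, cofinite_mem_U hU i,
        cofinite_mem_U hU j] with n h1 h3 h4
      rw [h1]
      have h3' : i ≤ n := h3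
      have h4' : j ≤ n := h4
      simp only [hBV_def]
      rw [dif_pos h3']
      exact ((hxy n) h3' h4').1
    · refine (hαS_verts j _).mpr ?_
      filter_upwards [out_mk_eventually (U := U) gy, cofinite_mem_U hU i,
        cofinite_mem_U hU j] with n h1 h3 h4
      rw [h1]
      have h3' : i ≤ n := h3
      have h4' : j ≤ n := h4
      simp only [hBV_def]
      rw [dif_pos h4']
      exact ((hxy n) h3' h4').2.1
    · rw [UGraph_adj_mk]
      filter_upwards [cofinite_mem_U hU i, cofinite_mem_U hU j] with n h3 h4
      exact ((hxy n) h3 h4).2.2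

end Komega

end Aux

/-- If `C` is limit nowhere dense (`K_ω ∉ C* ▽ ω`), then `C` is strongly
uniformly limit quasi-wide with some margin `s`. -/
theorem big_proof (U : Ultrafilter ℕ) (hU : ∀ a : ℕ, {a} ∉ U)
    (C : GraphClass) (hfin : FiniteClass C)
    (hnd : ¬ ∃ d : ℕ, InLimitMinor U C d Komega) :
    ∃ s : ℕ → ℕ, StrongUniformLimitQW U C s := by
  classical
  have hkey : ∀ d : ℕ, ∃ N : ℕ, ∀ (V : Type) (G : SimpleGraph V), InLimit U C G →
      ∀ W : Set V, W.Infinite → ∃ S X : Set V, S.Finite ∧ S.ncard ≤ N ∧ X ⊆ W ∧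
        X.Infinite ∧ ScatteredIn G d S X := by
    intro d
    by_contra hcon
    have hcon' : ∀ N : ℕ, ¬ (∀ (V : Type) (G : SimpleGraph V), InLimit U C G →
        ∀ W : Set V, W.Infinite → ∃ S X : Set V, S.Finite ∧ S.ncard ≤ N ∧ X ⊆ W ∧
          X.Infinite ∧ ScatteredIn G d S X) := fun N hN => hcon ⟨N, hN⟩
    -- for each m, some graph of `C` has a `K_{m+1}` minor at depth `2d`
    have hcl : ∀ m : ℕ, ∃ (V' : Type) (G' : SimpleGraph V'), C V' G' ∧
        IsShallowMinor G' (⊤ : SimpleGraph (Fin (m + 1))) (2 * d) := by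
      intro m
      have h := hcon' (2 * d * m)
      push_neg at h
      obtain ⟨V, G, hG, W, hW, hbad⟩ := h
      rcases proc hU G W hW d m with ⟨S, X, h1, h2, h3, h4, h5⟩ | ⟨α, hα, hαfin⟩
      · exact absurd (hbad S X h1 h2 h3 h4 h5) not_false
      · obtain ⟨Vs, Gs, hC, f, hinj, hhom⟩ := hG
        obtain ⟨α', hα', hαfin'⟩ := model_push f hinj hhom α hα hαfin
        obtain ⟨n0, hminor⟩ := transfer_clique α' hα' hαfin'
        exact ⟨Vs n0, Gs n0, hC n0, hminor⟩
    choose Qt QG hQC hQm using hcl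
    refine hnd ⟨2 * d, UVertex U Qt, UGraph U QG, ?_, ?_⟩
    · exact ⟨Qt, QG, hQC, id, fun a b h => h, fun a b h => h⟩
    · exact komega_in_ultraproduct hU hQm
  choose N hN using hkey
  refine ⟨N, ?_⟩
  intro d V G hG W hW
  exact hN d V G hG W hW

end NWD
end

section
/- If a class C of finite graphs is uniformly limit quasi-wide, then C is limit winning for splitter: for every d ∈ ℕ, splitter has a winning strategy in the limit d-splitter game on every graph of C*. -/
namespace NWD

open SimpleGraph Filter

/-! ### Auxiliary material for the proof of Statement 17 -/

open Classical in
/-- The set of vertices of a chosen short walk from `u` to `v` inside `A`, if one exists. -/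
noncomputable def wSup {V : Type} (G : SimpleGraph V) (d : ℕ) (A : Set V) (u v : V) :
    Set V :=
  if hx : ∃ p : G.Walk u v, p.length ≤ d ∧ ∀ y ∈ p.support, y ∈ A
  then {x | x ∈ hx.choose.support} else ∅

lemma wSup_finite {V : Type} (G : SimpleGraph V) (d : ℕ) (A : Set V) (u v : V) :
    (wSup G d A u v).Finite := by
  classical
  unfold wSup
  split
  · exact List.finite_toSet _
  · exact Set.finite_empty

lemma wSup_spec {V : Type} (G : SimpleGraph V) (d : ℕ) (A : Set V) (u v : V)
    (hx : ∃ p : G.Walk u v, p.length ≤ d ∧ ∀ y ∈ p.support, y ∈ A) :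
    ∃ p : G.Walk u v, p.length ≤ d ∧ (∀ y ∈ p.support, y ∈ A) ∧
      wSup G d A u v = {x | x ∈ p.support} := by
  classical
  refine ⟨hx.choose, hx.choose_spec.1, hx.choose_spec.2, ?_⟩
  rw [wSup, dif_pos hx]

/-- Splitter's strategy: remove the connector's vertex together with the supports of chosen
short walks from each earlier connector move (inside the arena of that earlier round). -/
noncomputable def qwStrat {V : Type} (G : SimpleGraph V) (d : ℕ) : SplitterStrategy V :=
  fun h v =>
    ({v} ∪ ⋃ i : Fin h.length,
        wSup G d (arenaAfter G d (h.take i)) (h.get i).1 v) ∩ arenaAfter G d h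

lemma arenaAfter_append {V : Type} (G : SimpleGraph V) (d : ℕ)
    (l : List (V × Set V)) (m : V × Set V) :
    arenaAfter G d (l ++ [m]) = arenaStep G d (arenaAfter G d l) m.1 m.2 := by
  simp [arenaAfter, List.foldl_append]

lemma arenaStep_subset {V : Type} (G : SimpleGraph V) (d : ℕ) (A : Set V) (v : V)
    (W : Set V) : arenaStep G d A v W ⊆ A := fun _ hx => hx.1

lemma splitterHist_length {V : Type} (σ : SplitterStrategy V) (c : ℕ → V) (n : ℕ) :
    (splitterHist σ c n).length = n := by
  induction n with
  | zero => rfl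
  | succ n ih => simp [splitterHist, ih]

lemma splitterHist_take {V : Type} (σ : SplitterStrategy V) (c : ℕ → V) {k n : ℕ}
    (hkn : k ≤ n) : (splitterHist σ c n).take k = splitterHist σ c k := by
  induction n with
  | zero =>
    have : k = 0 := Nat.le_zero.mp hkn
    subst this
    rfl
  | succ n ih =>
    rcases Nat.lt_or_ge k (n + 1) with h | h
    · have hk : k ≤ n := Nat.lt_succ_iff.mp h
      rw [splitterHist, List.take_append_of_le_length (by rw [splitterHist_length]; exact hk),
        ih hk]
    · have hkn' : k = n + 1 := le_antisymm hkn h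
      rw [hkn']
      exact List.take_of_length_le (le_of_eq (splitterHist_length σ c (n + 1)))

lemma splitterHist_get {V : Type} (σ : SplitterStrategy V) (c : ℕ → V) {i n : ℕ}
    (hi : i < (splitterHist σ c n).length) :
    ((splitterHist σ c n).get ⟨i, hi⟩).1 = c i := by
  induction n with
  | zero => simp [splitterHist_length] at hi
  | succ n ih =>
    have hi' : i < n + 1 := by rwa [splitterHist_length] at hi
    rcases Nat.lt_or_ge i n with h | h
    · have hlen : i < (splitterHist σ c n).length := by rwa [splitterHist_length]
      have : (splitterHist σ c (n + 1)).get ⟨i, hi⟩ = (splitterHist σ c n).get ⟨i, hlen⟩ := by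
        simp only [splitterHist, List.get_eq_getElem]
        exact List.getElem_append_left hlen
      rw [this, ih hlen]
    · have : i = n := le_antisymm (Nat.lt_succ_iff.mp hi') h
      subst this
      simp only [splitterHist, List.get_eq_getElem]
      have hlen : (splitterHist σ c i).length = i := splitterHist_length σ c i
      rw [List.getElem_append_right (by omega)]
      simp [hlen]

/-- If `C` is uniformly limit quasi-wide, then `C` is limit winning for
splitter. -/
theorem qw_gm (U : Ultrafilter ℕ) (hU : ∀ a : ℕ, {a} ∉ U)
    (C : GraphClass) (hfin : FiniteClass C) (hqw : UniformLimitQW U C) :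
    LimitWinningForSplitter U C := by
  intro d V G hG
  classical
  refine ⟨qwStrat G d, ?_, ?_⟩
  · intro c n _
    constructor
    · apply Set.Finite.inter_of_left
      exact (Set.finite_singleton _).union (Set.finite_iUnion fun i => wSup_finite G d _ _ _)
    · exact Set.inter_subset_right
  · intro c
    by_contra hcon
    push_neg at hcon
    set σ : SplitterStrategy V := qwStrat G d with hσ
    set A : ℕ → Set V := fun n => arenaAfter G d (splitterHist σ c n) with hA
    have hmem : ∀ n, c n ∈ A n := hcon
    have hstep : ∀ n, A (n + 1) =
        arenaStep G d (A n) (c n) (σ (splitterHist σ c n) (c n)) := by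
      intro n
      rw [hA]
      simp only [splitterHist]
      rw [arenaAfter_append]
    have hanti : ∀ {m n : ℕ}, m ≤ n → A n ⊆ A m := by
      intro m n hmn
      induction n with
      | zero => simp_all
      | succ n ih =>
        rcases Nat.lt_or_ge m (n + 1) with h | h
        · have := ih (Nat.lt_succ_iff.mp h)
          rw [hstep n]
          exact (arenaStep_subset G d _ _ _).trans this
        · have : m = n + 1 := le_antisymm hmn h
          subst this
          exact subset_rfl
    -- the strategy's value at round j, membership helper
    have hWval : ∀ j, σ (splitterHist σ c j) (c j) =
        ({c j} ∪ ⋃ i : Fin (splitterHist σ c j).length,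
          wSup G d (arenaAfter G d ((splitterHist σ c j).take i))
            ((splitterHist σ c j).get i).1 (c j)) ∩ A j := by
      intro j; rfl
    -- connector's moves get removed
    have hcrem : ∀ k, c k ∉ A (k + 1) := by
      intro k hk
      rw [hstep k] at hk
      obtain ⟨-, hnot, -⟩ := hk
      apply hnot
      rw [hWval k]
      exact ⟨Or.inl rfl, hmem k⟩
    have hinj : Function.Injective c := by
      intro a b hab
      by_contra hne
      rcases Nat.lt_or_ge a b with h | h
      · exact hcrem a (by rw [hab]; exact hanti (Nat.succ_le_of_lt h) (hmem b))
      · have h' : b < a := lt_of_le_of_ne h (Ne.symm hne)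
        exact hcrem b (by rw [← hab]; exact hanti (Nat.succ_le_of_lt h') (hmem a))
    -- the key walk extraction
    have hwalk : ∀ i j : ℕ, i < j →
        ∃ p : G.Walk (c i) (c j), p.length ≤ d ∧ (∀ y ∈ p.support, y ∈ A i) ∧
          (∀ y ∈ p.support, y ∉ A (j + 1)) := by
      intro i j hij
      have hcj : c j ∈ A (i + 1) := hanti (Nat.succ_le_of_lt hij) (hmem j)
      rw [hstep i] at hcj
      obtain ⟨-, -, q, hq1, hq2⟩ := hcj
      have hex : ∃ p : G.Walk (c i) (c j), p.length ≤ d ∧ ∀ y ∈ p.support, y ∈ A i :=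
        ⟨q, hq1, hq2⟩
      obtain ⟨p, hp1, hp2, hps⟩ := wSup_spec G d (A i) (c i) (c j) hex
      refine ⟨p, hp1, hp2, ?_⟩
      intro y hy hyA
      have hyAj : y ∈ A j := hanti (Nat.le_succ j) hyA
      rw [hstep j] at hyA
      obtain ⟨-, hynot, -⟩ := hyA
      apply hynot
      rw [hWval j]
      refine ⟨Or.inr ?_, hyAj⟩
      have hilen : i < (splitterHist σ c j).length := by
        rw [splitterHist_length]; exact hij
      refine Set.mem_iUnion.2 ⟨⟨i, hilen⟩, ?_⟩
      have ht : (splitterHist σ c j).take i = splitterHist σ c i :=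
        splitterHist_take σ c (le_of_lt hij)
      have hg : ((splitterHist σ c j).get ⟨i, hilen⟩).1 = c i := splitterHist_get σ c hilen
      simp only [ht, hg]
      rw [show arenaAfter G d (splitterHist σ c i) = A i from rfl, hps]
      exact hy
    -- apply uniform limit quasi-wideness to the set of connector moves
    have hrange : (Set.range c).Infinite := Set.infinite_range_of_injective hinj
    obtain ⟨S, X, hSfin, hXsub, hXinf, hsc⟩ := hqw d V G hG (Set.range c) hrange
    -- bound after which all surviving vertices of S survive forever
    have hM : ∃ M : ℕ, ∀ s ∈ S, (∃ n, s ∉ A n) → s ∉ A M := by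
      refine Set.Finite.induction_on (motive := fun S _ => ∃ M : ℕ, ∀ s ∈ S, (∃ n, s ∉ A n) → s ∉ A M) S hSfin ⟨0, by simp⟩ ?_
      rintro a T - - ⟨M, hMp⟩
      by_cases ha : ∃ n, a ∉ A n
      · obtain ⟨n, hn⟩ := ha
        refine ⟨max M n, ?_⟩
        rintro s hs hex
        rcases hs with rfl | hs
        · exact fun hx => hn (hanti (le_max_right M n) hx)
        · exact fun hx => hMp s hs hex (hanti (le_max_left M n) hx)
      · refine ⟨M, ?_⟩
        rintro s hs hex
        rcases hs with rfl | hs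
        · exact absurd hex ha
        · exact hMp s hs hex
    obtain ⟨M, hMp⟩ := hM
    -- the set of indices of X is infinite
    have hIinf : {k : ℕ | c k ∈ X}.Infinite := by
      intro hIfin
      apply hXinf
      have : X ⊆ c '' {k : ℕ | c k ∈ X} := by
        intro x hx
        obtain ⟨k, rfl⟩ := hXsub hx
        exact ⟨k, hx, rfl⟩
      exact (hIfin.image c).subset this
    obtain ⟨i, hiI, hiM⟩ := hIinf.exists_gt M
    obtain ⟨j, hjI, hij⟩ := hIinf.exists_gt i
    obtain ⟨p, hp1, hp2, hp3⟩ := hwalk i j hij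
    have havoid : ∀ x ∈ p.support, x ∉ S := by
      intro x hx hxS
      have h1 : x ∉ A M := hMp x hxS ⟨j + 1, hp3 x hx⟩
      exact h1 (hanti (le_of_lt hiM) (hp2 x hx))
    have hne : c i ≠ c j := fun h => absurd (hinj h) (Nat.ne_of_lt hij)
    have := hsc.2 (c i) hiI (c j) hjI hne p havoid
    omega

end NWD
end
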